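/- arXiv:2103.17212 — 3 statements merged into one kernel-verified Lean document; each statement's English description precedes it below -/
import Mathlib

section
/- For every t > 1/2 there exists a constant C_t > 0, independent of M, such that for all 1-periodic f in the Sobolev space H^t([0,1)), the trapezoidal-rule error satisfies |∫_0^1 f(x) dx − (1/M) ∑_{m=0}^{M-1} f(m/M)| ≤ C_t M^{−t} ‖f‖_{H^t}. -/
open Complex

lemma summable_mul_of_sq {ι : Type*} {a b : ι → ℝ}
    (ha : ∀ i, 0 ≤ a i) (hb : ∀ i, 0 ≤ b i)
    (hsa : Summable fun i => a i ^ 2) (hsb : Summable fun i => b i ^ 2) :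
    Summable fun i => a i * b i := by
  apply Summable.of_nonneg_of_le (fun i => mul_nonneg (ha i) (hb i))
    (fun i => ?_) ((hsa.add hsb).div_const 2)
  nlinarith [sq_nonneg (a i - b i)]

lemma tsum_mul_le_sqrt_mul_sqrt {ι : Type*} {a b : ι → ℝ}
    (ha : ∀ i, 0 ≤ a i) (hb : ∀ i, 0 ≤ b i)
    (hsa : Summable fun i => a i ^ 2) (hsb : Summable fun i => b i ^ 2) :
    ∑' i, a i * b i ≤ Real.sqrt (∑' i, a i ^ 2) * Real.sqrt (∑' i, b i ^ 2) := by
  refine Summable.tsum_le_of_sum_le (summable_mul_of_sq ha hb hsa hsb) fun s => ?_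
  calc ∑ i ∈ s, a i * b i
      ≤ Real.sqrt (∑ i ∈ s, a i ^ 2) * Real.sqrt (∑ i ∈ s, b i ^ 2) :=
        Real.sum_mul_le_sqrt_mul_sqrt s a b
    _ ≤ _ := by
        gcongr
        · exact Summable.sum_le_tsum s (fun i _ => sq_nonneg _) hsa
        · exact Summable.sum_le_tsum s (fun i _ => sq_nonneg _) hsb

lemma rpow_sq' {x : ℝ} (hx : 0 ≤ x) (s : ℝ) : (x ^ s) ^ 2 = x ^ (2 * s) := by
  rw [← Real.rpow_natCast (x ^ s) 2, ← Real.rpow_mul hx]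
  norm_num [mul_comm]

lemma integral_exp_int (k : ℤ) :
    (∫ x in (0:ℝ)..1, Complex.exp (2 * Real.pi * Complex.I * k * x)) = if k = 0 then 1 else 0 := by
  by_cases hk : k = 0
  · simp [hk]
  · rw [if_neg hk]
    have hc : (2 * (Real.pi:ℂ) * Complex.I * k) ≠ 0 := by
      apply mul_ne_zero (mul_ne_zero (mul_ne_zero two_ne_zero ?_) Complex.I_ne_zero)
      · exact_mod_cast Int.cast_ne_zero.mpr hk
      · exact_mod_cast Real.pi_ne_zero
    have h := integral_exp_mul_complex (a := 0) (b := 1) hc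
    rw [show (fun x : ℝ => Complex.exp (2 * Real.pi * Complex.I * k * x)) =
      (fun x : ℝ => Complex.exp ((2 * (Real.pi:ℂ) * Complex.I * k) * x)) from rfl, h]
    have h1 : Complex.exp (2 * (Real.pi:ℂ) * Complex.I * k * (1:ℝ)) = 1 := by
      rw [show (2 * (Real.pi:ℂ) * Complex.I * k * (1:ℝ)) = k * (2 * Real.pi * Complex.I) by
        push_cast; ring]
      exact Complex.exp_int_mul_two_pi_mul_I k
    have h0 : Complex.exp (2 * (Real.pi:ℂ) * Complex.I * k * (0:ℝ)) = 1 := by norm_num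
    rw [h1, h0]; simp

lemma exp_sum_eq (M : ℕ) (hM : 0 < M) (k : ℤ) :
    ∑ m ∈ Finset.range M, Complex.exp (2 * Real.pi * Complex.I * k * ((((m:ℕ):ℝ)/((M:ℕ):ℝ) : ℝ) : ℂ)) =
      if (M:ℤ) ∣ k then (M:ℂ) else 0 := by
  have hMC : ((M:ℕ):ℂ) ≠ 0 := Nat.cast_ne_zero.mpr hM.ne'
  set z : ℂ := Complex.exp (2 * Real.pi * Complex.I * k / M) with hz
  have hzm : ∀ m : ℕ, Complex.exp (2 * Real.pi * Complex.I * k * ((((m:ℕ):ℝ)/((M:ℕ):ℝ) : ℝ) : ℂ)) = z ^ m := by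
    intro m
    rw [hz, ← Complex.exp_nat_mul]
    congr 1
    push_cast
    field_simp
  simp_rw [hzm]
  have hzM : z ^ M = 1 := by
    rw [hz, ← Complex.exp_nat_mul]
    rw [show (M:ℂ) * (2 * Real.pi * Complex.I * k / M) = k * (2 * Real.pi * Complex.I) by
      field_simp]
    exact Complex.exp_int_mul_two_pi_mul_I k
  by_cases hdvd : (M:ℤ) ∣ k
  · obtain ⟨d, rfl⟩ := hdvd
    have hz1 : z = 1 := by
      rw [hz, show (2 * (Real.pi:ℂ) * Complex.I * ((M:ℤ) * d : ℤ) / M)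
          = d * (2 * Real.pi * Complex.I) by push_cast; field_simp]
      exact Complex.exp_int_mul_two_pi_mul_I d
    simp [hz1]
  · rw [if_neg hdvd]
    have hz1 : z ≠ 1 := by
      intro h
      rw [hz, Complex.exp_eq_one_iff] at h
      obtain ⟨n, hn⟩ := h
      apply hdvd
      refine ⟨n, ?_⟩
      have h2 : (2 * (Real.pi:ℂ) * Complex.I) ≠ 0 := by
        refine mul_ne_zero (mul_ne_zero two_ne_zero ?_) Complex.I_ne_zero
        exact_mod_cast Real.pi_ne_zero
      have : (k:ℂ) = (M:ℂ) * n := by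
        field_simp at hn
        have h3 : (2 * (Real.pi:ℂ) * Complex.I) * (k:ℂ)
            = (2 * (Real.pi:ℂ) * Complex.I) * ((M:ℂ) * n) := by
          linear_combination (2 * (Real.pi:ℂ) * Complex.I) * hn
        exact mul_left_cancel₀ h2 h3
      exact_mod_cast this
    rw [geom_sum_eq hz1, hzM]
    simp

/-- Squared-summability of Fourier coefficients with Sobolev weight: membership in `H^s`. -/
def InSobolev (s : ℝ) (c : ℤ → ℂ) : Prop :=
  Summable fun m : {m : ℤ // m ≠ 0} => |(m.1 : ℝ)| ^ (2 * s) * ‖c m.1‖ ^ 2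

/-- Periodic Sobolev norm `‖f‖_{H^s} = (|f̂_0|² + ∑_{m≠0} |m|^{2s}|f̂_m|²)^{1/2}`
in terms of the Fourier coefficients `c`. -/
noncomputable def sobolevNorm (s : ℝ) (c : ℤ → ℂ) : ℝ :=
  Real.sqrt (‖c 0‖ ^ 2 + ∑' m : {m : ℤ // m ≠ 0}, |(m.1 : ℝ)| ^ (2 * s) * ‖c m.1‖ ^ 2)

set_option maxHeartbeats 1000000 in
/-- for every `t > 1/2` there is `C_t > 0`, independent of `M`, such that
for all 1-periodic `f ∈ H^t`, `|∫₀¹ f − (1/M)∑_{m<M} f(m/M)| ≤ C_t M^{-t} ‖f‖_{H^t}`. -/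
theorem trapezoidal_rule_sobolev_error (t : ℝ) (ht : 1 / 2 < t) :
    ∃ C : ℝ, 0 < C ∧ ∀ (M : ℕ), 0 < M → ∀ (f : ℝ → ℂ) (c : ℤ → ℂ),
      (∀ x : ℝ, f (x + 1) = f x) →
      InSobolev t c →
      (∀ x : ℝ, f x = ∑' k : ℤ, c k * Complex.exp (2 * Real.pi * Complex.I * k * x)) →
      ‖(∫ x in (0:ℝ)..1, f x) - (1 / (M:ℂ)) * ∑ m ∈ Finset.range M, f ((m:ℝ) / M)‖
        ≤ C * (M:ℝ) ^ (-t) * sobolevNorm t c := by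
  have h2t : 1 < 2 * t := by linarith
  have hZsum : Summable fun n : ℤ => |(n:ℝ)| ^ (-(2*t)) := Real.summable_abs_int_rpow h2t
  set Z : ℝ := ∑' n : ℤ, |(n:ℝ)| ^ (-(2*t)) with hZdef
  have hZ0 : 0 ≤ Z := tsum_nonneg fun n => Real.rpow_nonneg (abs_nonneg _) _
  refine ⟨Real.sqrt Z + 1, by positivity, ?_⟩
  intro M hM f c hper hs hf
  have hs' : Summable fun m : {m : ℤ // m ≠ 0} => |(m.1 : ℝ)| ^ (2 * t) * ‖c m.1‖ ^ 2 := hs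
  have hMR : (0:ℝ) < M := Nat.cast_pos.mpr hM
  have hMZ : (M:ℤ) ≠ 0 := Int.natCast_ne_zero.mpr hM.ne'
  have hMC : (M:ℂ) ≠ 0 := Nat.cast_ne_zero.mpr hM.ne'
  -- summability of the coefficients
  have hbsq : Summable fun m : {m : ℤ // m ≠ 0} => (|(m.1:ℝ)| ^ t * ‖c m.1‖) ^ 2 := by
    refine hs'.congr fun m => ?_
    rw [mul_pow, rpow_sq' (abs_nonneg _)]
  have hZsub : Summable fun m : {m : ℤ // m ≠ 0} => |(m.1:ℝ)| ^ (-(2*t)) :=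
    hZsum.comp_injective Subtype.val_injective
  have hasq : Summable fun m : {m : ℤ // m ≠ 0} => (|(m.1:ℝ)| ^ (-t)) ^ 2 := by
    refine hZsub.congr fun m => ?_
    rw [rpow_sq' (abs_nonneg _)]
    norm_num
  have habs0 : Summable fun m : {m : ℤ // m ≠ 0} => ‖c m.1‖ := by
    refine (summable_mul_of_sq (fun m => Real.rpow_nonneg (abs_nonneg _) _)
      (fun m => mul_nonneg (Real.rpow_nonneg (abs_nonneg _) _) (norm_nonneg _)) hasq hbsq).congr
      fun m => ?_
    have hm : (0:ℝ) < |(m.1:ℝ)| := abs_pos.mpr (Int.cast_ne_zero.mpr m.2)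
    rw [← mul_assoc, ← Real.rpow_add hm]
    simp
  have habs : Summable fun k : ℤ => ‖c k‖ := by
    rw [← summable_subtype_and_compl (s := ({0} : Set ℤ))]
    constructor
    · exact Summable.of_finite
    · exact habs0
  -- values of the exponential
  have hnorm1 : ∀ (k : ℤ) (x : ℝ), ‖Complex.exp (2 * Real.pi * Complex.I * k * x)‖ = 1 := by
    intro k x
    rw [show (2 * (Real.pi:ℂ) * Complex.I * k * x) = ((2 * Real.pi * k * x : ℝ):ℂ) * Complex.I by
      push_cast; ring]
    exact Complex.norm_exp_ofReal_mul_I _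
  have heSummable : ∀ x : ℝ,
      Summable fun k : ℤ => c k * Complex.exp (2 * Real.pi * Complex.I * k * x) := by
    intro x
    apply Summable.of_norm
    simp only [norm_mul, hnorm1, mul_one]
    exact habs
  -- the integral equals c 0
  have hint : (∫ x in (0:ℝ)..1, f x) = c 0 := by
    calc (∫ x in (0:ℝ)..1, f x)
        = ∫ x in Set.Ioc (0:ℝ) 1, ∑' k : ℤ, c k * Complex.exp (2 * Real.pi * Complex.I * k * x) := by
          rw [intervalIntegral.integral_of_le zero_le_one]
          exact MeasureTheory.setIntegral_congr_fun measurableSet_Ioc fun x _ => hf x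
      _ = ∑' k : ℤ, ∫ x in Set.Ioc (0:ℝ) 1, c k * Complex.exp (2 * Real.pi * Complex.I * k * x) := by
          refine (MeasureTheory.integral_tsum_of_summable_integral_norm (fun k => ?_) ?_).symm
          · exact Continuous.integrableOn_Ioc
              (continuous_const.mul (Complex.continuous_exp.comp
                (continuous_const.mul Complex.continuous_ofReal)))
          · have heq : ∀ k : ℤ,
                (∫ x in Set.Ioc (0:ℝ) 1, ‖c k * Complex.exp (2 * Real.pi * Complex.I * k * x)‖)
                  = ‖c k‖ := by
              intro k
              simp only [norm_mul, hnorm1, mul_one]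
              simp [MeasureTheory.setIntegral_const, Real.volume_Ioc]
            simp only [heq]
            exact habs
      _ = ∑' k : ℤ, (if k = 0 then c 0 else 0) := by
          refine tsum_congr fun k => ?_
          rw [← intervalIntegral.integral_of_le zero_le_one,
            intervalIntegral.integral_const_mul, integral_exp_int k]
          by_cases hk : k = 0 <;> simp [hk]
      _ = c 0 := tsum_ite_eq 0 (fun _ => c 0)
  -- the quadrature sum
  have hquad : (1 / (M:ℂ)) * ∑ m ∈ Finset.range M, f ((m:ℝ) / M) = ∑' j : ℤ, c (j * M) := by
    have h1 : ∑ m ∈ Finset.range M, f ((m:ℝ) / M)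
        = ∑' k : ℤ, ∑ m ∈ Finset.range M,
            c k * Complex.exp (2 * Real.pi * Complex.I * k * ((((m:ℕ):ℝ)/((M:ℕ):ℝ) : ℝ) : ℂ)) := by
      calc ∑ m ∈ Finset.range M, f ((m:ℝ) / M)
          = ∑ m ∈ Finset.range M,
              ∑' k : ℤ, c k * Complex.exp (2 * Real.pi * Complex.I * k * ((((m:ℕ):ℝ)/((M:ℕ):ℝ) : ℝ) : ℂ)) :=
            Finset.sum_congr rfl fun m _ => hf _
        _ = _ := (Summable.tsum_finsetSum fun m _ => heSummable _).symm
    have h2 : ∀ k : ℤ, ∑ m ∈ Finset.range M,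
        c k * Complex.exp (2 * Real.pi * Complex.I * k * ((((m:ℕ):ℝ)/((M:ℕ):ℝ) : ℝ) : ℂ))
        = if (M:ℤ) ∣ k then (M:ℂ) * c k else 0 := by
      intro k
      rw [← Finset.mul_sum, exp_sum_eq M hM k]
      by_cases h : (M:ℤ) ∣ k <;> simp [h, mul_comm]
    have h3 : ∀ k : ℤ, (1/(M:ℂ)) * (if (M:ℤ) ∣ k then (M:ℂ) * c k else 0)
        = if (M:ℤ) ∣ k then c k else 0 := by
      intro k
      by_cases h : (M:ℤ) ∣ k
      · rw [if_pos h, if_pos h, ← mul_assoc, one_div, inv_mul_cancel₀ hMC, one_mul]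
      · simp [h]
    calc (1 / (M:ℂ)) * ∑ m ∈ Finset.range M, f ((m:ℝ) / M)
        = (1/(M:ℂ)) * ∑' k : ℤ, (if (M:ℤ) ∣ k then (M:ℂ) * c k else 0) := by
          rw [h1]; exact congrArg _ (tsum_congr h2)
      _ = ∑' k : ℤ, (1/(M:ℂ)) * (if (M:ℤ) ∣ k then (M:ℂ) * c k else 0) := tsum_mul_left.symm
      _ = ∑' k : ℤ, (if (M:ℤ) ∣ k then c k else 0) := tsum_congr h3
      _ = ∑' j : ℤ, (if (M:ℤ) ∣ j * M then c (j * M) else 0) := by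
          refine (Function.Injective.tsum_eq (g := fun j : ℤ => j * (M:ℤ))
            (mul_left_injective₀ hMZ) ?_).symm
          intro k hk
          rcases (by_contra fun h => hk (if_neg h) : (M:ℤ) ∣ k) with ⟨d, hd⟩
          exact ⟨d, by rw [hd]; ring⟩
      _ = ∑' j : ℤ, c (j * M) := tsum_congr fun j => if_pos (dvd_mul_left _ _)
  -- summability along the multiples
  have hTabs : Summable fun j : ℤ => ‖c (j * M)‖ :=
    habs.comp_injective (mul_left_injective₀ hMZ)
  have hTsum : Summable fun j : ℤ => c (j * M) := hTabs.of_norm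
  -- split off j = 0
  have hsplit : ∑' j : ℤ, c (j * M)
      = c 0 + ∑' j : {j : ℤ // j ≠ 0}, c (j.1 * M) := by
    have h := Summable.tsum_subtype_add_tsum_subtype_compl hTsum ({0} : Set ℤ)
    have e1 : ∑' (x : ({0} : Set ℤ)), c (x.1 * M) = c 0 := by
      calc ∑' (x : ({0} : Set ℤ)), c (x.1 * M) = c ((0:ℤ) * M) :=
            tsum_singleton 0 (fun j : ℤ => c (j * M))
        _ = c 0 := by rw [zero_mul]
    have e2 : ∑' (x : ↥(({0} : Set ℤ)ᶜ)), c (x.1 * M)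
        = ∑' j : {j : ℤ // j ≠ 0}, c (j.1 * M) := rfl
    rw [← h, e1, e2]
  -- the error term
  have herr : (∫ x in (0:ℝ)..1, f x) - (1 / (M:ℂ)) * ∑ m ∈ Finset.range M, f ((m:ℝ) / M)
      = -∑' j : {j : ℤ // j ≠ 0}, c (j.1 * M) := by
    rw [hint, hquad, hsplit]; ring
  rw [herr, norm_neg]
  -- Cauchy–Schwarz estimate
  set ι := {j : ℤ // j ≠ 0}
  have hφpos : ∀ j : ι, (0:ℝ) < |((j.1 * M : ℤ):ℝ)| := by
    intro j
    exact abs_pos.mpr (Int.cast_ne_zero.mpr (mul_ne_zero j.2 hMZ))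
  set A : ι → ℝ := fun j => |((j.1 * M : ℤ):ℝ)| ^ (-t) with hA
  set B : ι → ℝ := fun j => |((j.1 * M : ℤ):ℝ)| ^ t * ‖c (j.1 * M)‖ with hB
  have hA0 : ∀ j, 0 ≤ A j := fun j => Real.rpow_nonneg (abs_nonneg _) _
  have hB0 : ∀ j, 0 ≤ B j := fun j => mul_nonneg (Real.rpow_nonneg (abs_nonneg _) _) (norm_nonneg _)
  have hABf : ∀ j : ι, A j * B j = ‖c (j.1 * M)‖ := by
    intro j
    rw [hA, hB, ← mul_assoc, ← Real.rpow_add (hφpos j)]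
    simp
  have habsM : ∀ j : ι, |((j.1 * M : ℤ):ℝ)| = |(j.1:ℝ)| * (M:ℝ) := by
    intro j
    push_cast
    rw [abs_mul, abs_of_pos hMR]
  have hA2eq : ∀ j : ι, A j ^ 2 = |(j.1:ℝ)| ^ (-(2*t)) * (M:ℝ) ^ (-(2*t)) := by
    intro j
    rw [hA, rpow_sq' (abs_nonneg _), habsM j,
      Real.mul_rpow (abs_nonneg _) (le_of_lt hMR)]
    norm_num
  have hA2 : Summable fun j : ι => A j ^ 2 := by
    refine Summable.congr ?_ fun j => (hA2eq j).symm
    exact hZsub.mul_right _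
  have hB2eq : ∀ j : ι, B j ^ 2 = |((j.1 * M : ℤ):ℝ)| ^ (2*t) * ‖c (j.1 * M)‖ ^ 2 := by
    intro j
    rw [hB, mul_pow, rpow_sq' (abs_nonneg _)]
  have hφinj : Function.Injective fun j : ι => (⟨j.1 * M, mul_ne_zero j.2 hMZ⟩ : ι) := by
    intro a b hab
    exact Subtype.ext (mul_left_injective₀ hMZ (congrArg Subtype.val hab))
  have hsub : Summable fun j : ι => |((j.1 * M : ℤ):ℝ)| ^ (2 * t) * ‖c (j.1 * M)‖ ^ 2 := by
    have h2 := hs'.comp_injective hφinj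
    exact h2
  have hB2 : Summable fun j : ι => B j ^ 2 := by
    refine Summable.congr ?_ fun j => (hB2eq j).symm
    exact hsub
  have hB2le : ∑' j : ι, B j ^ 2 ≤ ‖c 0‖ ^ 2 + ∑' m : ι, |(m.1:ℝ)| ^ (2*t) * ‖c m.1‖ ^ 2 := by
    refine le_add_of_nonneg_of_le (sq_nonneg _) ?_
    calc ∑' j : ι, B j ^ 2
        = ∑' j : ι, |((j.1 * M : ℤ):ℝ)| ^ (2*t) * ‖c (j.1 * M)‖ ^ 2 := tsum_congr hB2eq
      _ ≤ ∑' m : ι, |(m.1:ℝ)| ^ (2*t) * ‖c m.1‖ ^ 2 := by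
          refine Summable.tsum_le_tsum_of_inj (fun j : ι => (⟨j.1 * M, mul_ne_zero j.2 hMZ⟩ : ι)) hφinj
            (fun m _ => mul_nonneg (Real.rpow_nonneg (abs_nonneg _) _) (sq_nonneg _))
            (fun j => le_rfl) hsub hs'
  -- collect the bound
  have hnormle : ‖∑' j : ι, c (j.1 * M)‖ ≤ ∑' j : ι, A j * B j := by
    rw [tsum_congr hABf]
    exact norm_tsum_le_tsum_norm (hTabs.comp_injective Subtype.val_injective)
  have hCS := tsum_mul_le_sqrt_mul_sqrt hA0 hB0 hA2 hB2
  have hsqrtA : Real.sqrt (∑' j : ι, A j ^ 2) ≤ Real.sqrt Z * (M:ℝ) ^ (-t) := by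
    have h1 : ∑' j : ι, A j ^ 2 = (∑' j : ι, |(j.1:ℝ)| ^ (-(2*t))) * (M:ℝ) ^ (-(2*t)) := by
      rw [tsum_congr hA2eq, tsum_mul_right]
    have h2 : (∑' j : ι, |(j.1:ℝ)| ^ (-(2*t))) ≤ Z := by
      refine Summable.tsum_le_tsum_of_inj (Subtype.val) Subtype.val_injective
        (fun m _ => Real.rpow_nonneg (abs_nonneg _) _) (fun j => le_rfl) hZsub hZsum
    have h3 : (M:ℝ) ^ (-(2*t)) = ((M:ℝ) ^ (-t)) ^ 2 := by
      rw [rpow_sq' (le_of_lt hMR)]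
      norm_num
    rw [h1, h3, Real.sqrt_mul (tsum_nonneg fun j => Real.rpow_nonneg (abs_nonneg _) _),
      Real.sqrt_sq (Real.rpow_nonneg (le_of_lt hMR) _)]
    gcongr
  have hsqrtB : Real.sqrt (∑' j : ι, B j ^ 2) ≤ sobolevNorm t c := by
    unfold sobolevNorm
    exact Real.sqrt_le_sqrt hB2le
  calc ‖∑' j : ι, c (j.1 * M)‖
      ≤ ∑' j : ι, A j * B j := hnormle
    _ ≤ Real.sqrt (∑' j : ι, A j ^ 2) * Real.sqrt (∑' j : ι, B j ^ 2) := hCS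
    _ ≤ (Real.sqrt Z * (M:ℝ) ^ (-t)) * sobolevNorm t c := by
        gcongr
    _ ≤ (Real.sqrt Z + 1) * (M:ℝ) ^ (-t) * sobolevNorm t c := by
        have hS : 0 ≤ sobolevNorm t c := Real.sqrt_nonneg _
        have hMt : (0:ℝ) ≤ (M:ℝ) ^ (-t) := Real.rpow_nonneg (le_of_lt hMR) _
        nlinarith [Real.sqrt_nonneg Z]
end

section
/- For every r ≥ 0 and s > 1/2 there exists a constant C_{r,s} > 0 such that for all 1-periodic u ∈ H^r and w ∈ H^s with max{r,s}-regularity as needed, the pointwise product satisfies ‖uw‖_{H^r} ≤ C_{r,s} (‖u‖_{H^r} ‖w‖_{H^s} + ‖u‖_{H^s} ‖w‖_{H^r}). -/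
open Complex

namespace SPE

noncomputable def W (s : ℝ) (n : ℤ) : ℝ := if n = 0 then 1 else |(n : ℝ)| ^ s

lemma W_zero (s : ℝ) : W s 0 = 1 := if_pos rfl

lemma W_ne (s : ℝ) {n : ℤ} (hn : n ≠ 0) : W s n = |(n : ℝ)| ^ s := if_neg hn

lemma one_le_abs_cast {n : ℤ} (hn : n ≠ 0) : (1 : ℝ) ≤ |(n : ℝ)| := by
  rw [← Int.cast_abs]
  exact_mod_cast Int.one_le_abs hn

lemma one_le_W {s : ℝ} (hs : 0 ≤ s) (n : ℤ) : 1 ≤ W s n := by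
  unfold W
  split
  · exact le_refl 1
  · calc (1 : ℝ) = 1 ^ s := (Real.one_rpow s).symm
      _ ≤ |(n : ℝ)| ^ s := Real.rpow_le_rpow zero_le_one (one_le_abs_cast (by assumption)) hs

lemma W_nonneg {s : ℝ} (hs : 0 ≤ s) (n : ℤ) : 0 ≤ W s n :=
  le_trans zero_le_one (one_le_W hs n)

lemma W_pos {s : ℝ} (hs : 0 ≤ s) (n : ℤ) : 0 < W s n :=
  lt_of_lt_of_le zero_lt_one (one_le_W hs n)

lemma abs_rpow_le_W {s : ℝ} (n : ℤ) : |(n : ℝ)| ^ s ≤ W s n := by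
  unfold W
  split
  · next h =>
    subst h
    simp only [Int.cast_zero, abs_zero]
    rcases eq_or_ne s 0 with h0 | h0
    · simp [h0]
    · simp [Real.zero_rpow h0]
  · exact le_rfl

lemma W_add_le {r : ℝ} (hr : 0 ≤ r) (x y : ℤ) :
    W r (x + y) ≤ 2 ^ r * (W r x + W r y) := by
  have h2 : (1 : ℝ) ≤ 2 ^ r := Real.one_le_rpow one_le_two hr
  have hWx := one_le_W hr x
  have hWy := one_le_W hr y
  rcases eq_or_ne (x + y) 0 with h | h
  · rw [h, W_zero]
    nlinarith
  · rw [W_ne r h]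
    have hmax : |((x + y : ℤ) : ℝ)| ≤ 2 * max |(x : ℝ)| |(y : ℝ)| := by
      push_cast
      calc |(x : ℝ) + (y : ℝ)| ≤ |(x : ℝ)| + |(y : ℝ)| := abs_add_le _ _
        _ ≤ 2 * max |(x : ℝ)| |(y : ℝ)| := by
            rcases le_total |(x : ℝ)| |(y : ℝ)| with hle | hle
            · rw [max_eq_right hle]; linarith
            · rw [max_eq_left hle]; linarith
    calc |((x + y : ℤ) : ℝ)| ^ r ≤ (2 * max |(x : ℝ)| |(y : ℝ)|) ^ r :=
          Real.rpow_le_rpow (abs_nonneg _) hmax hr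
      _ = 2 ^ r * (max |(x : ℝ)| |(y : ℝ)|) ^ r := by
          rw [Real.mul_rpow (by norm_num) (le_max_of_le_left (abs_nonneg _))]
      _ ≤ 2 ^ r * (W r x + W r y) := by
          have hb : (max |(x : ℝ)| |(y : ℝ)|) ^ r ≤ W r x + W r y := by
            rcases le_total |(x : ℝ)| |(y : ℝ)| with hle | hle
            · rw [max_eq_right hle]
              calc |(y : ℝ)| ^ r ≤ W r y := abs_rpow_le_W y
                _ ≤ W r x + W r y := by nlinarith
            · rw [max_eq_left hle]
              calc |(x : ℝ)| ^ r ≤ W r x := abs_rpow_le_W x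
                _ ≤ W r x + W r y := by nlinarith
          nlinarith

/-- Cauchy–Schwarz for infinite sums of nonnegative reals: summability. -/
lemma cs_summable {ι : Type*} {f g : ι → ℝ} (hf0 : ∀ i, 0 ≤ f i) (hg0 : ∀ i, 0 ≤ g i)
    (hf : Summable fun i => f i ^ 2) (hg : Summable fun i => g i ^ 2) :
    Summable fun i => f i * g i := by
  refine summable_of_sum_le (fun i => mul_nonneg (hf0 i) (hg0 i))
    (fun u => ?_ : ∀ u : Finset ι, _ ≤ Real.sqrt (∑' i, f i ^ 2) * Real.sqrt (∑' i, g i ^ 2))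
  calc ∑ i ∈ u, f i * g i
      ≤ Real.sqrt (∑ i ∈ u, f i ^ 2) * Real.sqrt (∑ i ∈ u, g i ^ 2) := by
        rw [← Real.sqrt_mul (Finset.sum_nonneg fun i _ => sq_nonneg (f i))]
        refine (Real.le_sqrt (Finset.sum_nonneg fun i _ => mul_nonneg (hf0 i) (hg0 i))
          (mul_nonneg (Finset.sum_nonneg fun i _ => sq_nonneg _)
            (Finset.sum_nonneg fun i _ => sq_nonneg _))).2 ?_
        exact Finset.sum_mul_sq_le_sq_mul_sq u f g
    _ ≤ Real.sqrt (∑' i, f i ^ 2) * Real.sqrt (∑' i, g i ^ 2) :=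
        mul_le_mul (Real.sqrt_le_sqrt (Summable.sum_le_tsum u (fun i _ => sq_nonneg _) hf))
          (Real.sqrt_le_sqrt (Summable.sum_le_tsum u (fun i _ => sq_nonneg _) hg))
          (Real.sqrt_nonneg _) (Real.sqrt_nonneg _)

lemma cs_tsum_le {ι : Type*} {f g : ι → ℝ} (hf0 : ∀ i, 0 ≤ f i) (hg0 : ∀ i, 0 ≤ g i)
    (hf : Summable fun i => f i ^ 2) (hg : Summable fun i => g i ^ 2) :
    ∑' i, f i * g i ≤ Real.sqrt (∑' i, f i ^ 2) * Real.sqrt (∑' i, g i ^ 2) := by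
  refine Summable.tsum_le_of_sum_le (cs_summable hf0 hg0 hf hg) (fun u => ?_)
  calc ∑ i ∈ u, f i * g i
      ≤ Real.sqrt (∑ i ∈ u, f i ^ 2) * Real.sqrt (∑ i ∈ u, g i ^ 2) := by
        rw [← Real.sqrt_mul (Finset.sum_nonneg fun i _ => sq_nonneg (f i))]
        refine (Real.le_sqrt (Finset.sum_nonneg fun i _ => mul_nonneg (hf0 i) (hg0 i))
          (mul_nonneg (Finset.sum_nonneg fun i _ => sq_nonneg _)
            (Finset.sum_nonneg fun i _ => sq_nonneg _))).2 ?_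
        exact Finset.sum_mul_sq_le_sq_mul_sq u f g
    _ ≤ Real.sqrt (∑' i, f i ^ 2) * Real.sqrt (∑' i, g i ^ 2) :=
        mul_le_mul (Real.sqrt_le_sqrt (Summable.sum_le_tsum u (fun i _ => sq_nonneg _) hf))
          (Real.sqrt_le_sqrt (Summable.sum_le_tsum u (fun i _ => sq_nonneg _) hg))
          (Real.sqrt_nonneg _) (Real.sqrt_nonneg _)

/-- Young's inequality for discrete convolution, `ℓ² * ℓ¹ ⊆ ℓ²`: summability. -/
lemma young {f g : ℤ → ℝ} (hf0 : ∀ n, 0 ≤ f n) (hg0 : ∀ n, 0 ≤ g n)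
    (hf : Summable fun n => f n ^ 2) (hg : Summable g) :
    (Summable fun n : ℤ => (∑' m : ℤ, f (n - m) * g m) ^ 2) ∧
      Real.sqrt (∑' n : ℤ, (∑' m : ℤ, f (n - m) * g m) ^ 2) ≤
        Real.sqrt (∑' n : ℤ, f n ^ 2) * ∑' m : ℤ, g m := by
  set Mf : ℝ := Real.sqrt (∑' n : ℤ, f n ^ 2) with hMf
  have hMf0 : 0 ≤ Mf := Real.sqrt_nonneg _
  have hfle : ∀ k : ℤ, f k ≤ Mf := by
    intro k
    rw [hMf, show f k = Real.sqrt (f k ^ 2) by rw [Real.sqrt_sq (hf0 k)]]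
    exact Real.sqrt_le_sqrt (Summable.le_tsum hf k (fun j _ => sq_nonneg _))
  set h : ℤ → ℝ := fun n => ∑' m : ℤ, f (n - m) * g m with hh
  have hsumm : ∀ n : ℤ, Summable fun m : ℤ => f (n - m) * g m := by
    intro n
    refine (hg.mul_left Mf).of_nonneg_of_le
      (fun m => mul_nonneg (hf0 _) (hg0 m)) (fun m => ?_)
    exact mul_le_mul_of_nonneg_right (hfle _) (hg0 m)
  have hh0 : ∀ n, 0 ≤ h n := fun n =>
    tsum_nonneg fun m => mul_nonneg (hf0 _) (hg0 m)
  set K : ℝ := Mf * ∑' m : ℤ, g m with hK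
  have hK0 : 0 ≤ K := mul_nonneg hMf0 (tsum_nonneg hg0)
  -- translation invariance of the ℓ² sum
  have htrans : ∀ m : ℤ, ∑' n : ℤ, f (n - m) ^ 2 = ∑' n : ℤ, f n ^ 2 := by
    intro m
    exact ((Equiv.subRight m).tsum_eq fun n => f n ^ 2)
  have htransS : ∀ m : ℤ, Summable fun n : ℤ => f (n - m) ^ 2 := by
    intro m
    exact ((Equiv.subRight m).summable_iff (f := fun n => f n ^ 2)).2 hf
  -- the key finite-set bound
  have key : ∀ u : Finset ℤ, ∑ n ∈ u, h n ^ 2 ≤ K ^ 2 := by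
    intro u
    set S : ℝ := ∑ n ∈ u, h n ^ 2 with hS
    have hS0 : 0 ≤ S := Finset.sum_nonneg fun n _ => sq_nonneg _
    -- inner finite CS bound
    have inner_bound : ∀ m : ℤ, ∑ n ∈ u, h n * f (n - m) ≤ Real.sqrt S * Mf := by
      intro m
      calc ∑ n ∈ u, h n * f (n - m)
          ≤ Real.sqrt (∑ n ∈ u, h n ^ 2) * Real.sqrt (∑ n ∈ u, f (n - m) ^ 2) := by
            rw [← Real.sqrt_mul (Finset.sum_nonneg fun n _ => sq_nonneg _)]
            refine (Real.le_sqrt (Finset.sum_nonneg fun n _ =>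
              mul_nonneg (hh0 n) (hf0 _)) (mul_nonneg
                (Finset.sum_nonneg fun n _ => sq_nonneg _)
                (Finset.sum_nonneg fun n _ => sq_nonneg _))).2 ?_
            exact Finset.sum_mul_sq_le_sq_mul_sq u _ _
        _ ≤ Real.sqrt S * Mf := by
            refine mul_le_mul_of_nonneg_left ?_ (Real.sqrt_nonneg _)
            rw [hMf, ← htrans m]
            exact Real.sqrt_le_sqrt (Summable.sum_le_tsum u (fun n _ => sq_nonneg _) (htransS m))
    have step : S ≤ Real.sqrt S * K := by
      have e1 : S = ∑ n ∈ u, ∑' m : ℤ, h n * (f (n - m) * g m) := by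
        refine Finset.sum_congr rfl fun n _ => ?_
        rw [sq, hh]
        exact (tsum_mul_left).symm
      have hsumm2 : ∀ n : ℤ, Summable fun m : ℤ => h n * (f (n - m) * g m) :=
        fun n => (hsumm n).mul_left (h n)
      have e2 : ∑ n ∈ u, ∑' m : ℤ, h n * (f (n - m) * g m)
          = ∑' m : ℤ, ∑ n ∈ u, h n * (f (n - m) * g m) :=
        (Summable.tsum_finsetSum fun n _ => hsumm2 n).symm
      have e3 : ∀ m : ℤ, ∑ n ∈ u, h n * (f (n - m) * g m)
          = (∑ n ∈ u, h n * f (n - m)) * g m := by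
        intro m
        rw [Finset.sum_mul]
        exact Finset.sum_congr rfl fun n _ => by ring
      have hbd : ∀ m : ℤ, (∑ n ∈ u, h n * f (n - m)) * g m ≤ Real.sqrt S * Mf * g m :=
        fun m => mul_le_mul_of_nonneg_right (inner_bound m) (hg0 m)
      have hsle : ∑' m : ℤ, (∑ n ∈ u, h n * f (n - m)) * g m
          ≤ ∑' m : ℤ, Real.sqrt S * Mf * g m := by
        refine Summable.tsum_le_tsum hbd ?_ ((hg.mul_left _))
        refine (hg.mul_left (Real.sqrt S * Mf)).of_nonneg_of_le
          (fun m => mul_nonneg (Finset.sum_nonneg fun n _ =>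
            mul_nonneg (hh0 n) (hf0 _)) (hg0 m)) hbd
      calc S = ∑' m : ℤ, (∑ n ∈ u, h n * f (n - m)) * g m := by
            rw [e1, e2]; exact tsum_congr e3
        _ ≤ ∑' m : ℤ, Real.sqrt S * Mf * g m := hsle
        _ = Real.sqrt S * K := by rw [tsum_mul_left, hK]; ring
    -- conclude S ≤ K ^ 2
    have hsqrt : Real.sqrt S ≤ K := by
      rcases eq_or_lt_of_le (Real.sqrt_nonneg S) with h0 | h0
      · rw [← h0]; exact hK0
      · have : Real.sqrt S * Real.sqrt S ≤ Real.sqrt S * K := by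
          rwa [Real.mul_self_sqrt hS0]
        exact le_of_mul_le_mul_left this h0
    calc S = Real.sqrt S ^ 2 := (Real.sq_sqrt hS0).symm
      _ ≤ K ^ 2 := by nlinarith [Real.sqrt_nonneg S]
  have hsum2 : Summable fun n : ℤ => h n ^ 2 :=
    summable_of_sum_le (fun n => sq_nonneg _) key
  refine ⟨hsum2, ?_⟩
  have : ∑' n : ℤ, h n ^ 2 ≤ K ^ 2 := Summable.tsum_le_of_sum_le hsum2 key
  calc Real.sqrt (∑' n : ℤ, h n ^ 2) ≤ Real.sqrt (K ^ 2) := Real.sqrt_le_sqrt this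
    _ = K := Real.sqrt_sq hK0

lemma Wsq {s : ℝ} {m : ℤ} (hm : m ≠ 0) (x : ℝ) :
    (W s m * x) ^ 2 = |(m : ℝ)| ^ (2 * s) * x ^ 2 := by
  have habs : (0 : ℝ) < |(m : ℝ)| := lt_of_lt_of_le zero_lt_one (one_le_abs_cast hm)
  rw [W_ne s hm, mul_pow, sq, ← Real.rpow_add habs]
  ring_nf

/-- The equivalence between `{m : ℤ // m ≠ 0}` and the subtype of the complement
of `{0}`. -/
def e0 : {m : ℤ // m ≠ 0} ≃ ↑(({0} : Set ℤ)ᶜ) :=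
  Equiv.subtypeEquivRight (fun m => by simp)

lemma summable_of_inSobolev {s : ℝ} {c : ℤ → ℂ} (h : InSobolev s c) :
    Summable fun n : ℤ => (W s n * ‖c n‖) ^ 2 := by
  rw [← summable_subtype_and_compl (s := ({0} : Set ℤ))]
  constructor
  · apply Summable.of_finite
  · have : Summable fun m : ↑(({0} : Set ℤ)ᶜ) => |(m.1 : ℝ)| ^ (2 * s) * ‖c m.1‖ ^ 2 :=
      (e0.summable_iff (f := fun m : ↑(({0} : Set ℤ)ᶜ) =>
        |(m.1 : ℝ)| ^ (2 * s) * ‖c m.1‖ ^ 2)).2 ?_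
    · refine this.congr fun m => ?_
      have hm : m.1 ≠ 0 := fun h' => m.2 (by simp [h'])
      rw [Wsq hm]
    · refine h.congr fun m => rfl
  
lemma tsum_W_eq {s : ℝ} {c : ℤ → ℂ} (h : Summable fun n : ℤ => (W s n * ‖c n‖) ^ 2) :
    ∑' n : ℤ, (W s n * ‖c n‖) ^ 2
      = ‖c 0‖ ^ 2 + ∑' m : {m : ℤ // m ≠ 0}, |(m.1 : ℝ)| ^ (2 * s) * ‖c m.1‖ ^ 2 := by
  rw [← Summable.tsum_add_tsum_compl (s := ({0} : Set ℤ))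
    (h.subtype ({0} : Set ℤ)) (h.subtype (({0} : Set ℤ)ᶜ))]
  congr 1
  · rw [tsum_singleton 0 (fun n : ℤ => (W s n * ‖c n‖) ^ 2)]
    rw [W_zero]
    ring
  · rw [← e0.tsum_eq (fun m : ↑(({0} : Set ℤ)ᶜ) => (W s m.1 * ‖c m.1‖) ^ 2)]
    exact tsum_congr fun m => Wsq (s := s) m.2 ‖c m.1‖

lemma sobolevNorm_eq {s : ℝ} {c : ℤ → ℂ} (h : Summable fun n : ℤ => (W s n * ‖c n‖) ^ 2) :
    sobolevNorm s c = Real.sqrt (∑' n : ℤ, (W s n * ‖c n‖) ^ 2) := by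
  rw [sobolevNorm, tsum_W_eq h]

lemma inSobolev_mono {t s : ℝ} {c : ℤ → ℂ} (hts : t ≤ s)
    (h : InSobolev s c) : InSobolev t c := by
  refine h.of_nonneg_of_le (fun m => mul_nonneg (Real.rpow_nonneg (abs_nonneg _) _)
    (sq_nonneg _)) (fun m => ?_)
  refine mul_le_mul_of_nonneg_right ?_ (sq_nonneg _)
  exact Real.rpow_le_rpow_of_exponent_le (one_le_abs_cast m.2) (by linarith)

noncomputable def Ks (s : ℝ) : ℝ := Real.sqrt (∑' n : ℤ, ((W s n)⁻¹) ^ 2)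

lemma Vsq_summable {s : ℝ} (hs : 1 / 2 < s) :
    Summable fun n : ℤ => ((W s n)⁻¹) ^ 2 := by
  have h1 : Summable fun n : ℤ => |(n : ℝ)| ^ (-(2 * s)) :=
    Real.summable_abs_int_rpow (by linarith)
  have h2 : Summable fun n : ℤ => if n = 0 then (1 : ℝ) else 0 :=
    summable_of_ne_finset_zero (s := {0}) (fun n hn => by
      simp only [Finset.mem_singleton] at hn
      simp [hn])
  refine (h1.add h2).congr fun n => ?_
  rcases eq_or_ne n 0 with h | h
  · subst h
    rw [W_zero]
    have hne : -(2 * s) ≠ 0 := by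
      intro hc
      have : 2 * s = 0 := by linarith [neg_eq_zero.1 hc]
      linarith
    rw [show |((0 : ℤ) : ℝ)| = 0 by simp, Real.zero_rpow hne]
    norm_num
  · rw [if_neg h, add_zero, inv_pow, Real.rpow_neg (abs_nonneg _)]
    congr 1
    have := Wsq (s := s) h 1
    simpa using this.symm

lemma l1_summable {s : ℝ} (hs : 1 / 2 < s) {c : ℤ → ℂ} (h : InSobolev s c) :
    Summable fun m : ℤ => ‖c m‖ := by
  have hs0 : (0 : ℝ) ≤ s := by linarith
  refine (cs_summable (f := fun n => (W s n)⁻¹) (g := fun n => W s n * ‖c n‖)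
    (fun n => inv_nonneg.2 (W_nonneg hs0 n))
    (fun n => mul_nonneg (W_nonneg hs0 n) (norm_nonneg _))
    (Vsq_summable hs) (summable_of_inSobolev h)).congr fun n => ?_
  rw [inv_mul_cancel_left₀ (ne_of_gt (W_pos hs0 n))]

lemma l1_tsum_le {s : ℝ} (hs : 1 / 2 < s) {c : ℤ → ℂ} (h : InSobolev s c) :
    ∑' m : ℤ, ‖c m‖ ≤ Ks s * sobolevNorm s c := by
  have hs0 : (0 : ℝ) ≤ s := by linarith
  have := cs_tsum_le (f := fun n => (W s n)⁻¹) (g := fun n => W s n * ‖c n‖)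
    (fun n => inv_nonneg.2 (W_nonneg hs0 n))
    (fun n => mul_nonneg (W_nonneg hs0 n) (norm_nonneg _))
    (Vsq_summable hs) (summable_of_inSobolev h)
  rw [sobolevNorm_eq (summable_of_inSobolev h), Ks]
  calc ∑' m : ℤ, ‖c m‖ = ∑' n : ℤ, ((W s n)⁻¹) * (W s n * ‖c n‖) :=
        tsum_congr fun n => (inv_mul_cancel_left₀ (ne_of_gt (W_pos hs0 n)) _).symm
    _ ≤ _ := this

end SPE

set_option maxHeartbeats 1000000 in
open SPE in
/-- for `r ≥ 0` and `s > 1/2` there is `C_{r,s} > 0` such that for all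
1-periodic `u, w ∈ H^{max{r,s}}` the pointwise product `uw` (whose Fourier coefficients
are the convolution `p n = ∑_m u_{n-m} w_m`) satisfies
`‖uw‖_{H^r} ≤ C (‖u‖_{H^r}‖w‖_{H^s} + ‖u‖_{H^s}‖w‖_{H^r})`. -/
theorem sobolev_product_estimate (r s : ℝ) (hr : 0 ≤ r) (hs : 1 / 2 < s) :
    ∃ C : ℝ, 0 < C ∧ ∀ (a b p : ℤ → ℂ),
      InSobolev (max r s) a → InSobolev (max r s) b →
      (∀ n : ℤ, p n = ∑' m : ℤ, a (n - m) * b m) →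
      sobolevNorm r p ≤ C * (sobolevNorm r a * sobolevNorm s b
        + sobolevNorm s a * sobolevNorm r b) := by
  have hs0 : (0 : ℝ) ≤ s := by linarith
  have hKs0 : 0 ≤ Ks s := Real.sqrt_nonneg _
  have h2r0 : (0 : ℝ) < 2 ^ r := Real.rpow_pos_of_pos two_pos r
  refine ⟨2 ^ r * Real.sqrt 2 * Ks s + 1, by positivity, ?_⟩
  intro a b p ha hb hp
  have har : InSobolev r a := inSobolev_mono (le_max_left r s) ha
  have has : InSobolev s a := inSobolev_mono (le_max_right r s) ha
  have hbr : InSobolev r b := inSobolev_mono (le_max_left r s) hb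
  have hbs : InSobolev s b := inSobolev_mono (le_max_right r s) hb
  have SAr : Summable fun n : ℤ => (W r n * ‖a n‖) ^ 2 := summable_of_inSobolev har
  have SBr : Summable fun n : ℤ => (W r n * ‖b n‖) ^ 2 := summable_of_inSobolev hbr
  have l1a : Summable fun m : ℤ => ‖a m‖ := l1_summable hs has
  have l1b : Summable fun m : ℤ => ‖b m‖ := l1_summable hs hbs
  have l1a_le : ∑' m : ℤ, ‖a m‖ ≤ Ks s * sobolevNorm s a := l1_tsum_le hs has
  have l1b_le : ∑' m : ℤ, ‖b m‖ ≤ Ks s * sobolevNorm s b := l1_tsum_le hs hbs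
  -- norms are nonneg
  have hNra : 0 ≤ sobolevNorm r a := Real.sqrt_nonneg _
  have hNrb : 0 ≤ sobolevNorm r b := Real.sqrt_nonneg _
  have hNsa : 0 ≤ sobolevNorm s a := Real.sqrt_nonneg _
  have hNsb : 0 ≤ sobolevNorm s b := Real.sqrt_nonneg _
  have hl1a0 : 0 ≤ ∑' m : ℤ, ‖a m‖ := tsum_nonneg fun m => norm_nonneg _
  have hl1b0 : 0 ≤ ∑' m : ℤ, ‖b m‖ := tsum_nonneg fun m => norm_nonneg _
  -- bounds on individual terms of ℓ² sequences
  have bdd : ∀ (f : ℤ → ℝ), (∀ n, 0 ≤ f n) → (Summable fun n => f n ^ 2) →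
      ∀ k, f k ≤ Real.sqrt (∑' n : ℤ, f n ^ 2) := by
    intro f hf0 hf k
    rw [show f k = Real.sqrt (f k ^ 2) by rw [Real.sqrt_sq (hf0 k)]]
    exact Real.sqrt_le_sqrt (Summable.le_tsum hf k fun j _ => sq_nonneg _)
  have hWa : ∀ k : ℤ, W r k * ‖a k‖ ≤ Real.sqrt (∑' n : ℤ, (W r n * ‖a n‖) ^ 2) :=
    bdd _ (fun n => mul_nonneg (W_nonneg hr n) (norm_nonneg _)) SAr
  have hWb : ∀ k : ℤ, W r k * ‖b k‖ ≤ Real.sqrt (∑' n : ℤ, (W r n * ‖b n‖) ^ 2) :=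
    bdd _ (fun n => mul_nonneg (W_nonneg hr n) (norm_nonneg _)) SBr
  set MA : ℝ := Real.sqrt (∑' n : ℤ, (W r n * ‖a n‖) ^ 2) with hMA
  set MB : ℝ := Real.sqrt (∑' n : ℤ, (W r n * ‖b n‖) ^ 2) with hMB
  have hMA0 : 0 ≤ MA := Real.sqrt_nonneg _
  have hMB0 : 0 ≤ MB := Real.sqrt_nonneg _
  set G1 : ℤ → ℝ := fun n => ∑' m : ℤ, (W r (n - m) * ‖a (n - m)‖) * ‖b m‖ with hG1
  set G2 : ℤ → ℝ := fun n => ∑' m : ℤ, (W r (n - m) * ‖b (n - m)‖) * ‖a m‖ with hG2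
  have youngA := young (f := fun n => W r n * ‖a n‖) (g := fun m => ‖b m‖)
    (fun n => mul_nonneg (W_nonneg hr n) (norm_nonneg _)) (fun m => norm_nonneg _) SAr l1b
  have youngB := young (f := fun n => W r n * ‖b n‖) (g := fun m => ‖a m‖)
    (fun n => mul_nonneg (W_nonneg hr n) (norm_nonneg _)) (fun m => norm_nonneg _) SBr l1a
  have SG1 : Summable fun n : ℤ => G1 n ^ 2 := youngA.1
  have SG2 : Summable fun n : ℤ => G2 n ^ 2 := youngB.1
  have boundG1 : Real.sqrt (∑' n : ℤ, G1 n ^ 2) ≤ MA * ∑' m : ℤ, ‖b m‖ := youngA.2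
  have boundG2 : Real.sqrt (∑' n : ℤ, G2 n ^ 2) ≤ MB * ∑' m : ℤ, ‖a m‖ := youngB.2
  have hG10 : ∀ n, 0 ≤ G1 n := fun n =>
    tsum_nonneg fun m => mul_nonneg (mul_nonneg (W_nonneg hr _) (norm_nonneg _)) (norm_nonneg _)
  have hG20 : ∀ n, 0 ≤ G2 n := fun n =>
    tsum_nonneg fun m => mul_nonneg (mul_nonneg (W_nonneg hr _) (norm_nonneg _)) (norm_nonneg _)
  -- pointwise estimate
  have hpt : ∀ n : ℤ, W r n * ‖p n‖ ≤ 2 ^ r * (G1 n + G2 n) := by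
    intro n
    have hA1 : ∀ k : ℤ, ‖a k‖ ≤ ∑' m : ℤ, ‖a m‖ :=
      fun k => Summable.le_tsum l1a k fun j _ => norm_nonneg _
    have S0 : Summable fun m : ℤ => ‖a (n - m)‖ * ‖b m‖ := by
      refine (l1b.mul_left (∑' m : ℤ, ‖a m‖)).of_nonneg_of_le
        (fun m => mul_nonneg (norm_nonneg _) (norm_nonneg _)) (fun m => ?_)
      exact mul_le_mul_of_nonneg_right (hA1 _) (norm_nonneg _)
    have S1 : Summable fun m : ℤ => (W r (n - m) * ‖a (n - m)‖) * ‖b m‖ := by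
      refine (l1b.mul_left MA).of_nonneg_of_le
        (fun m => mul_nonneg (mul_nonneg (W_nonneg hr _) (norm_nonneg _)) (norm_nonneg _))
        (fun m => mul_le_mul_of_nonneg_right (hWa _) (norm_nonneg _))
    have Sa_trans : Summable fun m : ℤ => ‖a (n - m)‖ :=
      ((Equiv.subLeft n).summable_iff (f := fun m : ℤ => ‖a m‖)).2 l1a
    have S2 : Summable fun m : ℤ => ‖a (n - m)‖ * (W r m * ‖b m‖) := by
      refine (Sa_trans.mul_right MB).of_nonneg_of_le
        (fun m => mul_nonneg (norm_nonneg _) (mul_nonneg (W_nonneg hr _) (norm_nonneg _)))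
        (fun m => mul_le_mul_of_nonneg_left (hWb m) (norm_nonneg _))
    have hpn : ‖p n‖ ≤ ∑' m : ℤ, ‖a (n - m)‖ * ‖b m‖ := by
      rw [hp n]
      calc ‖∑' m : ℤ, a (n - m) * b m‖ ≤ ∑' m : ℤ, ‖a (n - m) * b m‖ :=
            norm_tsum_le_tsum_norm (S0.congr fun m => (norm_mul _ _).symm)
        _ = ∑' m : ℤ, ‖a (n - m)‖ * ‖b m‖ := tsum_congr fun m => norm_mul _ _
    have hstep2 : ∑' m : ℤ, ‖a (n - m)‖ * (W r m * ‖b m‖) = G2 n := by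
      rw [hG2]
      rw [← (Equiv.subLeft n).tsum_eq (fun m : ℤ => ‖a (n - m)‖ * (W r m * ‖b m‖))]
      refine tsum_congr fun k => ?_
      simp only [Equiv.subLeft_apply, sub_sub_cancel]
      ring
    calc W r n * ‖p n‖ ≤ W r n * ∑' m : ℤ, ‖a (n - m)‖ * ‖b m‖ :=
          mul_le_mul_of_nonneg_left hpn (W_nonneg hr n)
      _ = ∑' m : ℤ, W r n * (‖a (n - m)‖ * ‖b m‖) := tsum_mul_left.symm
      _ ≤ ∑' m : ℤ, 2 ^ r * ((W r (n - m) * ‖a (n - m)‖) * ‖b m‖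
            + ‖a (n - m)‖ * (W r m * ‖b m‖)) := by
          refine Summable.tsum_le_tsum (fun m => ?_) (S0.mul_left _) ((S1.add S2).mul_left _)
          have hW := W_add_le hr (n - m) m
          rw [sub_add_cancel] at hW
          have h0 : 0 ≤ ‖a (n - m)‖ * ‖b m‖ := mul_nonneg (norm_nonneg _) (norm_nonneg _)
          calc W r n * (‖a (n - m)‖ * ‖b m‖)
              ≤ (2 ^ r * (W r (n - m) + W r m)) * (‖a (n - m)‖ * ‖b m‖) :=
                mul_le_mul_of_nonneg_right hW h0
            _ = 2 ^ r * ((W r (n - m) * ‖a (n - m)‖) * ‖b m‖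
                + ‖a (n - m)‖ * (W r m * ‖b m‖)) := by ring
      _ = 2 ^ r * (G1 n + G2 n) := by
          rw [tsum_mul_left, Summable.tsum_add S1 S2, hstep2]
  -- combine
  have SF : Summable fun n : ℤ => (W r n * ‖p n‖) ^ 2 := by
    refine Summable.of_nonneg_of_le (fun n => sq_nonneg _) (fun n => ?_)
      (((SG1.add SG2).mul_left ((2 ^ r) ^ 2 * 2)))
    have h1 : 0 ≤ W r n * ‖p n‖ := mul_nonneg (W_nonneg hr n) (norm_nonneg _)
    have h2 := hpt n
    calc (W r n * ‖p n‖) ^ 2 ≤ (2 ^ r * (G1 n + G2 n)) ^ 2 := by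
          exact pow_le_pow_left₀ h1 h2 2
      _ = (2 ^ r) ^ 2 * (G1 n + G2 n) ^ 2 := by ring
      _ ≤ (2 ^ r) ^ 2 * (2 * (G1 n ^ 2 + G2 n ^ 2)) := by
          refine mul_le_mul_of_nonneg_left ?_ (sq_nonneg _)
          nlinarith [sq_nonneg (G1 n - G2 n)]
      _ = (2 ^ r) ^ 2 * 2 * (G1 n ^ 2 + G2 n ^ 2) := by ring
  have tsum_F_le : ∑' n : ℤ, (W r n * ‖p n‖) ^ 2
      ≤ (2 ^ r) ^ 2 * 2 * (∑' n : ℤ, G1 n ^ 2 + ∑' n : ℤ, G2 n ^ 2) := by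
    calc ∑' n : ℤ, (W r n * ‖p n‖) ^ 2
        ≤ ∑' n : ℤ, (2 ^ r) ^ 2 * 2 * (G1 n ^ 2 + G2 n ^ 2) := by
          refine Summable.tsum_le_tsum (fun n => ?_) SF ((SG1.add SG2).mul_left _)
          have h1 : 0 ≤ W r n * ‖p n‖ := mul_nonneg (W_nonneg hr n) (norm_nonneg _)
          have h2 := hpt n
          calc (W r n * ‖p n‖) ^ 2 ≤ (2 ^ r * (G1 n + G2 n)) ^ 2 := by
                exact pow_le_pow_left₀ h1 h2 2
            _ = (2 ^ r) ^ 2 * (G1 n + G2 n) ^ 2 := by ring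
            _ ≤ (2 ^ r) ^ 2 * (2 * (G1 n ^ 2 + G2 n ^ 2)) := by
                refine mul_le_mul_of_nonneg_left ?_ (sq_nonneg _)
                nlinarith [sq_nonneg (G1 n - G2 n)]
            _ = (2 ^ r) ^ 2 * 2 * (G1 n ^ 2 + G2 n ^ 2) := by ring
      _ = (2 ^ r) ^ 2 * 2 * (∑' n : ℤ, G1 n ^ 2 + ∑' n : ℤ, G2 n ^ 2) := by
          rw [tsum_mul_left, Summable.tsum_add SG1 SG2]
  set X1 : ℝ := Real.sqrt (∑' n : ℤ, G1 n ^ 2) with hX1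
  set X2 : ℝ := Real.sqrt (∑' n : ℤ, G2 n ^ 2) with hX2
  have hX10 : 0 ≤ X1 := Real.sqrt_nonneg _
  have hX20 : 0 ≤ X2 := Real.sqrt_nonneg _
  have hsum1 : ∑' n : ℤ, G1 n ^ 2 = X1 ^ 2 := (Real.sq_sqrt (tsum_nonneg fun n => sq_nonneg _)).symm
  have hsum2 : ∑' n : ℤ, G2 n ^ 2 = X2 ^ 2 := (Real.sq_sqrt (tsum_nonneg fun n => sq_nonneg _)).symm
  have hNp : sobolevNorm r p ≤ 2 ^ r * Real.sqrt 2 * (X1 + X2) := by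
    rw [sobolevNorm_eq SF]
    calc Real.sqrt (∑' n : ℤ, (W r n * ‖p n‖) ^ 2)
        ≤ Real.sqrt ((2 ^ r) ^ 2 * 2 * (X1 ^ 2 + X2 ^ 2)) := by
          refine Real.sqrt_le_sqrt ?_
          rw [← hsum1, ← hsum2]
          exact tsum_F_le
      _ ≤ Real.sqrt ((2 ^ r) ^ 2 * 2 * (X1 + X2) ^ 2) := by
          refine Real.sqrt_le_sqrt ?_
          refine mul_le_mul_of_nonneg_left ?_ (by positivity)
          nlinarith
      _ = 2 ^ r * Real.sqrt 2 * (X1 + X2) := by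
          rw [show ((2 ^ r : ℝ)) ^ 2 * 2 * (X1 + X2) ^ 2
              = (2 ^ r * (X1 + X2)) ^ 2 * 2 by ring]
          rw [Real.sqrt_mul (sq_nonneg _), Real.sqrt_sq (by positivity)]
          ring
  -- bound X1 and X2
  have hNa_eq : MA = sobolevNorm r a := (sobolevNorm_eq SAr).symm
  have hNb_eq : MB = sobolevNorm r b := (sobolevNorm_eq SBr).symm
  have hX1le : X1 ≤ sobolevNorm r a * (Ks s * sobolevNorm s b) := by
    calc X1 ≤ MA * ∑' m : ℤ, ‖b m‖ := boundG1
      _ ≤ MA * (Ks s * sobolevNorm s b) := mul_le_mul_of_nonneg_left l1b_le hMA0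
      _ = sobolevNorm r a * (Ks s * sobolevNorm s b) := by rw [hNa_eq]
  have hX2le : X2 ≤ sobolevNorm r b * (Ks s * sobolevNorm s a) := by
    calc X2 ≤ MB * ∑' m : ℤ, ‖a m‖ := boundG2
      _ ≤ MB * (Ks s * sobolevNorm s a) := mul_le_mul_of_nonneg_left l1a_le hMB0
      _ = sobolevNorm r b * (Ks s * sobolevNorm s a) := by rw [hNb_eq]
  have hE0 : 0 ≤ sobolevNorm r a * sobolevNorm s b + sobolevNorm s a * sobolevNorm r b := by
    positivity
  calc sobolevNorm r p ≤ 2 ^ r * Real.sqrt 2 * (X1 + X2) := hNp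
    _ ≤ 2 ^ r * Real.sqrt 2 * (sobolevNorm r a * (Ks s * sobolevNorm s b)
        + sobolevNorm r b * (Ks s * sobolevNorm s a)) := by
        refine mul_le_mul_of_nonneg_left (add_le_add hX1le hX2le) (by positivity)
    _ = (2 ^ r * Real.sqrt 2 * Ks s) * (sobolevNorm r a * sobolevNorm s b
        + sobolevNorm s a * sobolevNorm r b) := by ring
    _ ≤ (2 ^ r * Real.sqrt 2 * Ks s + 1) * (sobolevNorm r a * sobolevNorm s b
        + sobolevNorm s a * sobolevNorm r b) := by
        refine mul_le_mul_of_nonneg_right ?_ hE0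
        linarith
end

section
/- For every r > s > 1/2 there exists a constant C_{r,s} > 0, independent of f, g, and M, such that for all 1-periodic f, g ∈ H^r([0,1)), the discrete inner product ⟨f,g⟩_M = (1/M) ∑_{m=1}^{M} conj(f(x_m)) g(x_m) over equispaced points x_m = x̃ + m/M satisfies |⟨f,g⟩ − ⟨f,g⟩_M| ≤ C_{r,s} M^{−r} (‖f‖_{H^r} ‖g‖_{H^s} + ‖f‖_{H^s} ‖g‖_{H^r}), where ⟨f,g⟩ = ∫_0^1 conj(f) g. -/
open Complex

set_option maxHeartbeats 1600000

namespace DIPE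

lemma rpow_anti {x y : ℝ} (hx : 0 < x) (hxy : x ≤ y) {t : ℝ} (ht : 0 ≤ t) :
    y ^ (-t) ≤ x ^ (-t) := Real.rpow_le_rpow_of_nonpos hx hxy (neg_nonpos.2 ht)

lemma summable_mul_sq {ι : Type*} {f g : ι → ℝ}
    (hf : Summable fun i => f i ^ 2) (hg : Summable fun i => g i ^ 2) :
    Summable fun i => f i * g i := by
  refine Summable.of_abs (Summable.of_nonneg_of_le (fun i => abs_nonneg _)
    (fun i => ?_) (((hf.add hg).div_const 2)))
  have h := two_mul_le_add_sq (|f i|) (|g i|)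
  rw [abs_mul]
  nlinarith [_root_.sq_abs (f i), _root_.sq_abs (g i)]

lemma tsum_cs {ι : Type*} {f g : ι → ℝ} (hf0 : ∀ i, 0 ≤ f i) (hg0 : ∀ i, 0 ≤ g i)
    (hf : Summable fun i => f i ^ 2) (hg : Summable fun i => g i ^ 2) :
    ∑' i, f i * g i ≤ Real.sqrt (∑' i, f i ^ 2) * Real.sqrt (∑' i, g i ^ 2) := by
  refine Summable.tsum_le_of_sum_le (summable_mul_sq hf hg) (fun u => ?_)
  have h1 := Finset.sum_mul_sq_le_sq_mul_sq u f g
  have h2 : ∑ i ∈ u, f i * g i ≤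
      Real.sqrt ((∑ i ∈ u, f i ^ 2) * ∑ i ∈ u, g i ^ 2) := by
    rw [show Real.sqrt ((∑ i ∈ u, f i ^ 2) * ∑ i ∈ u, g i ^ 2)
        = Real.sqrt ((∑ i ∈ u, f i ^ 2) * ∑ i ∈ u, g i ^ 2) from rfl]
    refine (Real.le_sqrt (Finset.sum_nonneg fun i _ => mul_nonneg (hf0 i) (hg0 i))
      (mul_nonneg (Finset.sum_nonneg fun i _ => sq_nonneg _)
        (Finset.sum_nonneg fun i _ => sq_nonneg _))).2 h1
  refine h2.trans ?_
  rw [Real.sqrt_mul (Finset.sum_nonneg fun i _ => sq_nonneg _)]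
  exact mul_le_mul (Real.sqrt_le_sqrt (Summable.sum_le_tsum u (fun i _ => sq_nonneg _) hf))
    (Real.sqrt_le_sqrt (Summable.sum_le_tsum u (fun i _ => sq_nonneg _) hg))
    (Real.sqrt_nonneg _) (Real.sqrt_nonneg _)

/-- summability of `(1+|k|)^(-t)` over `ℤ` for `t > 1`. -/
lemma summable_one_add_abs {t : ℝ} (ht : 1 < t) :
    Summable (fun k : ℤ => (1 + |(k : ℝ)|) ^ (-t)) := by
  have h0 : Summable (fun k : ℤ => |(k : ℝ)| ^ (-t) + if k = 0 then 1 else 0) := by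
    refine (Real.summable_abs_int_rpow ht).add
      (summable_of_ne_finset_zero (s := {0}) (fun k hk => ?_))
    simp only [Finset.mem_singleton] at hk
    simp [hk]
  refine Summable.of_nonneg_of_le (fun k => Real.rpow_nonneg (by positivity) _)
    (fun k => ?_) h0
  rcases eq_or_ne k 0 with rfl | hk
  · norm_num [Real.one_rpow, Real.zero_rpow (show -t ≠ 0 by intro h; rw [neg_eq_zero] at h; linarith)]
  · have h1 : (1:ℝ) ≤ |(k:ℝ)| := by
      rcases k.one_le_abs (by omega) with h
      exact_mod_cast (by exact_mod_cast h : (1:ℤ) ≤ |k|)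
    have := rpow_anti (x := |(k:ℝ)|) (y := 1 + |(k:ℝ)|) (by linarith) (by linarith)
      (le_of_lt (by linarith : (0:ℝ) < t))
    simp only [hk, if_false, add_zero]
    exact this

/-- Summability over an arithmetic progression, uniform in `l` and `M`. -/
lemma prog {t : ℝ} (ht : 1 < t) :
    ∃ K : ℝ, 0 < K ∧ ∀ (M : ℕ), 0 < M → ∀ l : ℤ,
      (Summable fun j : ℤ => (1 + |(l : ℝ) - j * M|) ^ (-t)) ∧
      ∑' j : ℤ, (1 + |(l : ℝ) - j * M|) ^ (-t) ≤ K := by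
  refine ⟨(4:ℝ) ^ t * ∑' i : ℤ, (1 + |(i : ℝ)|) ^ (-t), by
    have h1 : (0:ℝ) < ∑' i : ℤ, (1 + |(i : ℝ)|) ^ (-t) := by
      have := Summable.le_tsum (summable_one_add_abs ht) 0
        (fun j _ => Real.rpow_nonneg (by positivity) _)
      have h2 : (0:ℝ) < (1 + |((0:ℤ) : ℝ)|) ^ (-t) := Real.rpow_pos_of_pos (by norm_num) _
      linarith
    positivity, ?_⟩
  intro M hM l
  set j₀ : ℤ := round ((l : ℝ) / M) with hj₀
  have hMR : (1:ℝ) ≤ (M:ℝ) := by exact_mod_cast hM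
  -- pointwise bound
  have key : ∀ j : ℤ, (1 + |(l : ℝ) - j * M|) ^ (-t) ≤
      (4:ℝ) ^ t * (1 + |((j - j₀ : ℤ) : ℝ)|) ^ (-t) := by
    intro j
    have hround : |(l : ℝ) / M - j₀| ≤ 1/2 := by
      simpa [hj₀] using abs_sub_round ((l : ℝ) / M)
    have hl : |(l : ℝ) - j₀ * M| ≤ M / 2 := by
      have : (l : ℝ) - j₀ * M = ((l:ℝ)/M - j₀) * M := by
        field_simp
      rw [this, abs_mul, abs_of_pos (by linarith : (0:ℝ) < (M:ℝ))]
      calc |(l : ℝ)/M - j₀| * M ≤ (1/2) * M := by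
            exact mul_le_mul_of_nonneg_right hround (by linarith)
        _ = M / 2 := by ring
    have hbase : ((1:ℝ) + |((j - j₀ : ℤ) : ℝ)|) / 4 ≤ 1 + |(l : ℝ) - j * M| := by
      rcases eq_or_ne j j₀ with rfl | hjj
      · simp only [sub_self, Int.cast_zero, abs_zero, add_zero]
        have := abs_nonneg ((l:ℝ) - j₀ * M)
        linarith
      · have hi1 : (1:ℝ) ≤ |((j - j₀ : ℤ) : ℝ)| := by
          exact_mod_cast Int.one_le_abs (sub_ne_zero.mpr hjj)
        have h2 : |(l:ℝ) - j * M| ≥ |((j - j₀:ℤ):ℝ)| * M - M/2 := by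
          have : (l:ℝ) - j * M = ((l:ℝ) - j₀ * M) - ((j - j₀ : ℤ) : ℝ) * M := by
            push_cast; ring
          rw [this]
          have h3 := abs_sub_abs_le_abs_sub (((j - j₀ : ℤ) : ℝ) * M) ((l:ℝ) - j₀ * M)
          have h4 : |(((j - j₀ : ℤ) : ℝ)) * M| = |((j - j₀ : ℤ) : ℝ)| * M := by
            rw [abs_mul, abs_of_pos (by linarith : (0:ℝ) < (M:ℝ))]
          rw [abs_sub_comm]
          nlinarith [abs_nonneg ((l:ℝ) - j₀*M)]
        have h5 : |((j - j₀:ℤ):ℝ)| * M - M/2 ≥ |((j - j₀:ℤ):ℝ)| * M / 2 := by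
          nlinarith
        nlinarith
    calc (1 + |(l : ℝ) - j * M|) ^ (-t)
        ≤ (((1:ℝ) + |((j - j₀ : ℤ) : ℝ)|) / 4) ^ (-t) :=
          rpow_anti (by positivity) hbase (by linarith)
      _ = ((1:ℝ) + |((j - j₀ : ℤ) : ℝ)|) ^ (-t) / (4:ℝ) ^ (-t) :=
          Real.div_rpow (by positivity) (by norm_num) (-t)
      _ = (4:ℝ) ^ t * (1 + |((j - j₀ : ℤ) : ℝ)|) ^ (-t) := by
          rw [Real.rpow_neg (by norm_num : (0:ℝ) ≤ 4), div_eq_mul_inv, inv_inv]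
          ring
  have hsum2 : Summable (fun j : ℤ => (4:ℝ) ^ t * (1 + |((j - j₀ : ℤ) : ℝ)|) ^ (-t)) := by
    have : Summable (fun j : ℤ => (1 + |((j - j₀ : ℤ) : ℝ)|) ^ (-t)) :=
      ((Equiv.subRight j₀).summable_iff).2 (summable_one_add_abs ht)
    exact this.mul_left _
  have hsum1 : Summable (fun j : ℤ => (1 + |(l : ℝ) - j * M|) ^ (-t)) :=
    Summable.of_nonneg_of_le (fun j => Real.rpow_nonneg (by positivity) _) key hsum2
  refine ⟨hsum1, ?_⟩
  calc ∑' j : ℤ, (1 + |(l : ℝ) - j * M|) ^ (-t)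
      ≤ ∑' j : ℤ, (4:ℝ) ^ t * (1 + |((j - j₀ : ℤ) : ℝ)|) ^ (-t) :=
        Summable.tsum_le_tsum key hsum1 hsum2
    _ = (4:ℝ) ^ t * ∑' j : ℤ, (1 + |((j - j₀ : ℤ) : ℝ)|) ^ (-t) := tsum_mul_left
    _ = (4:ℝ) ^ t * ∑' i : ℤ, (1 + |(i : ℝ)|) ^ (-t) := by
        congr 1
        exact (Equiv.subRight j₀).tsum_eq (fun i : ℤ => (1 + |(i : ℝ)|) ^ (-t))

lemma sq_rpow (x t : ℝ) (hx : 0 ≤ x) : (x ^ t) ^ 2 = x ^ (2*t) := by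
  rw [← Real.rpow_natCast (x ^ t) 2, ← Real.rpow_mul hx]
  norm_num [mul_comm]

lemma sobolevNorm_nonneg (s : ℝ) (c : ℤ → ℂ) : 0 ≤ sobolevNorm s c := Real.sqrt_nonneg _

lemma sobolevNorm_sq (s : ℝ) (c : ℤ → ℂ) :
    sobolevNorm s c ^ 2 = ‖c 0‖ ^ 2 + ∑' m : {m : ℤ // m ≠ 0}, |(m.1 : ℝ)| ^ (2 * s) * ‖c m.1‖ ^ 2 := by
  rw [sobolevNorm, Real.sq_sqrt]
  have : 0 ≤ ∑' m : {m : ℤ // m ≠ 0}, |(m.1 : ℝ)| ^ (2 * s) * ‖c m.1‖ ^ 2 :=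
    tsum_nonneg (fun m => mul_nonneg (Real.rpow_nonneg (abs_nonneg _) _) (sq_nonneg _))
  positivity

lemma insobolev_mono {s r : ℝ} (hs : 0 < s) (hsr : s ≤ r) {c : ℤ → ℂ} (hc : InSobolev r c) :
    InSobolev s c := by
  refine Summable.of_nonneg_of_le
    (fun m => mul_nonneg (Real.rpow_nonneg (abs_nonneg _) _) (sq_nonneg _)) (fun m => ?_) hc
  have h1 : (1:ℝ) ≤ |(m.1 : ℝ)| := by
    exact_mod_cast Int.one_le_abs m.2
  exact mul_le_mul_of_nonneg_right
    (Real.rpow_le_rpow_of_exponent_le h1 (by linarith)) (sq_nonneg _)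

/-- The weight `w` function used to compare full-`ℤ` sums with `sobolevNorm`. -/
noncomputable def w (s : ℝ) (c : ℤ → ℂ) : ℤ → ℝ :=
  fun k => if k = 0 then ‖c 0‖ ^ 2 else |(k:ℝ)| ^ (2*s) * ‖c k‖ ^ 2

lemma w_nonneg (s : ℝ) (c : ℤ → ℂ) (k : ℤ) : 0 ≤ w s c k := by
  unfold w; split
  · positivity
  · positivity

lemma w_summable {s : ℝ} {c : ℤ → ℂ} (hc : InSobolev s c) : Summable (w s c) := by
  have h1 : Summable ((({m : ℤ | m ≠ 0}).indicator (fun m => |(m:ℝ)| ^ (2*s) * ‖c m‖ ^ 2))) := by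
    refine summable_subtype_iff_indicator.mp ?_
    exact hc
  have h2 : Summable (fun k : ℤ => if k = 0 then ‖c 0‖ ^ 2 else 0) :=
    summable_of_ne_finset_zero (s := {0}) (fun k hk => by
      simp only [Finset.mem_singleton] at hk; simp [hk])
  refine (h1.add h2).congr (fun k => ?_)
  rcases eq_or_ne k 0 with rfl | hk
  · simp [w, Set.indicator]
  · simp [w, hk, Set.indicator]

lemma w_tsum {s : ℝ} {c : ℤ → ℂ} (hc : InSobolev s c) :
    ∑' k : ℤ, w s c k = sobolevNorm s c ^ 2 := by
  rw [sobolevNorm_sq]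
  have h1 : Summable ((({m : ℤ | m ≠ 0}).indicator (fun m => |(m:ℝ)| ^ (2*s) * ‖c m‖ ^ 2))) :=
    summable_subtype_iff_indicator.mp hc
  have h2 : Summable (fun k : ℤ => if k = 0 then ‖c 0‖ ^ 2 else 0) :=
    summable_of_ne_finset_zero (s := {0}) (fun k hk => by
      simp only [Finset.mem_singleton] at hk; simp [hk])
  have key : ∀ k : ℤ, w s c k = (fun k : ℤ => if k = 0 then ‖c 0‖ ^ 2 else 0) k
      + (({m : ℤ | m ≠ 0}).indicator (fun m => |(m:ℝ)| ^ (2*s) * ‖c m‖ ^ 2)) k := by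
    intro k
    rcases eq_or_ne k 0 with rfl | hk
    · simp [w, Set.indicator]
    · simp [w, hk, Set.indicator]
  calc ∑' k : ℤ, w s c k = ∑' k : ℤ, ((fun k : ℤ => if k = 0 then ‖c 0‖ ^ 2 else 0) k
        + (({m : ℤ | m ≠ 0}).indicator (fun m => |(m:ℝ)| ^ (2*s) * ‖c m‖ ^ 2)) k) :=
        tsum_congr key
    _ = (∑' k : ℤ, (fun k : ℤ => if k = 0 then ‖c 0‖ ^ 2 else 0) k)
        + ∑' k : ℤ, (({m : ℤ | m ≠ 0}).indicator (fun m => |(m:ℝ)| ^ (2*s) * ‖c m‖ ^ 2)) k :=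
        Summable.tsum_add h2 h1
    _ = ‖c 0‖ ^ 2 + ∑' m : {m : ℤ // m ≠ 0}, |(m.1 : ℝ)| ^ (2 * s) * ‖c m.1‖ ^ 2 := by
        congr 1
        · exact tsum_ite_eq (0:ℤ) (fun _ => ‖c 0‖ ^ 2)
        · exact (tsum_subtype {m : ℤ | m ≠ 0} (fun m => |(m:ℝ)| ^ (2*s) * ‖c m‖ ^ 2)).symm

lemma weight_le {s : ℝ} (hs : 0 < s) (c : ℤ → ℂ) (k : ℤ) :
    ((1 + |(k:ℝ)|) ^ s * ‖c k‖) ^ 2 ≤ (2:ℝ) ^ (2*s) * w s c k := by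
  rw [mul_pow, sq_rpow _ _ (by positivity)]
  rcases eq_or_ne k 0 with rfl | hk
  · simp only [w, if_pos rfl, eq_self_iff_true, if_true, Int.cast_zero, abs_zero, add_zero, Real.one_rpow, one_mul]
    have h1 : (1:ℝ) ≤ (2:ℝ) ^ (2*s) :=
      Real.one_le_rpow (by norm_num) (by positivity)
    nlinarith [sq_nonneg (‖c 0‖)]
  · have h1 : (1:ℝ) ≤ |(k : ℝ)| := by exact_mod_cast Int.one_le_abs hk
    have h2 : (1 + |(k:ℝ)|) ^ (2*s) ≤ (2 * |(k:ℝ)|) ^ (2*s) :=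
      Real.rpow_le_rpow (by positivity) (by linarith) (by positivity)
    rw [Real.mul_rpow (by norm_num) (abs_nonneg _)] at h2
    simp only [w, if_neg hk]
    have := mul_le_mul_of_nonneg_right h2 (sq_nonneg ‖c k‖)
    nlinarith [sq_nonneg ‖c k‖]

lemma weight_summable {s : ℝ} (hs : 0 < s) {c : ℤ → ℂ} (hc : InSobolev s c) :
    Summable (fun k : ℤ => ((1 + |(k:ℝ)|) ^ s * ‖c k‖) ^ 2) := by
  refine Summable.of_nonneg_of_le (fun k => sq_nonneg _) (fun k => weight_le hs c k)
    ((w_summable hc).mul_left _)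

lemma weight_tsum_le {s : ℝ} (hs : 0 < s) {c : ℤ → ℂ} (hc : InSobolev s c) :
    ∑' k : ℤ, ((1 + |(k:ℝ)|) ^ s * ‖c k‖) ^ 2 ≤ (2:ℝ) ^ (2*s) * sobolevNorm s c ^ 2 := by
  calc ∑' k : ℤ, ((1 + |(k:ℝ)|) ^ s * ‖c k‖) ^ 2
      ≤ ∑' k : ℤ, (2:ℝ) ^ (2*s) * w s c k :=
        Summable.tsum_le_tsum (weight_le hs c) (weight_summable hs hc) ((w_summable hc).mul_left _)
    _ = (2:ℝ) ^ (2*s) * ∑' k : ℤ, w s c k := tsum_mul_left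
    _ = (2:ℝ) ^ (2*s) * sobolevNorm s c ^ 2 := by rw [w_tsum hc]

lemma summable_norm_coeff {s : ℝ} (hs : 1/2 < s) {c : ℤ → ℂ} (hc : InSobolev s c) :
    Summable (fun k : ℤ => ‖c k‖) := by
  have h1 : Summable (fun k : ℤ => ((1 + |(k:ℝ)|) ^ (-s)) ^ 2) := by
    refine (summable_one_add_abs (t := 2*s) (by linarith)).congr (fun k => ?_)
    rw [sq_rpow _ _ (by positivity)]
    ring_nf
  have h2 := weight_summable (by linarith : (0:ℝ) < s) hc
  refine (summable_mul_sq h1 h2).congr (fun k => ?_)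
  rw [← mul_assoc, ← Real.rpow_add (by positivity : (0:ℝ) < 1 + |(k:ℝ)|)]
  simp

lemma rpow_two_eq {x : ℝ} (hx : 0 ≤ x) {t : ℝ} : (x ^ t) ^ 2 = x ^ (2*t) := sq_rpow x t hx

/-- Core one-sided aliasing estimate. -/
lemma core1 {r s : ℝ} (hs : 1/2 < s) (hrs : s < r) :
    ∃ C : ℝ, 0 < C ∧ ∀ (M : ℕ), 0 < M → ∀ (cf cg : ℤ → ℂ), InSobolev r cf → InSobolev r cg →
      (Summable fun p : ℤ × ℤ =>
        (if p.2 ≠ 0 ∧ |p.1| ≤ |p.1 + p.2 * (M:ℤ)| then ‖cf p.1‖ * ‖cg (p.1 + p.2 * (M:ℤ))‖ else 0)) ∧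
      ∑' p : ℤ × ℤ, (if p.2 ≠ 0 ∧ |p.1| ≤ |p.1 + p.2 * (M:ℤ)| then
          ‖cf p.1‖ * ‖cg (p.1 + p.2 * (M:ℤ))‖ else 0)
        ≤ C * (M:ℝ) ^ (-r) * (sobolevNorm s cf * sobolevNorm r cg) := by
  have hr1 : (1:ℝ) < 2*r := by linarith
  have hs1 : (1:ℝ) < 2*s := by linarith
  have hr0 : (0:ℝ) < r := by linarith
  have hs0 : (0:ℝ) < s := by linarith
  obtain ⟨K, hK0, hK⟩ := prog (t := 2*s) hs1
  set Z : ℝ := ∑' j : ℤ, |(j:ℝ)| ^ (-(2*r)) with hZdef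
  have hZsum : Summable (fun j : ℤ => |(j:ℝ)| ^ (-(2*r))) := Real.summable_abs_int_rpow hr1
  have hZpos : 0 < Z := by
    have h1 := Summable.le_tsum hZsum 1 (fun j _ => Real.rpow_nonneg (abs_nonneg _) _)
    have h2 : |((1:ℤ):ℝ)| ^ (-(2*r)) = 1 := by norm_num
    rw [h2] at h1; linarith
  refine ⟨(2:ℝ)^r * ((2:ℝ)^s * Real.sqrt Z) * Real.sqrt K, by positivity, ?_⟩
  intro M hM cf cg hcf hcg
  have hcfs : InSobolev s cf := insobolev_mono hs0 hrs.le hcf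
  have hMR : (0:ℝ) < (M:ℝ) := by exact_mod_cast hM
  -- the two Cauchy-Schwarz factors
  set F : ℤ × ℤ → ℝ := fun p => ((1 + |(p.1:ℝ)|) ^ s * ‖cf p.1‖) * |(p.2:ℝ)| ^ (-r) with hF
  set G : ℤ × ℤ → ℝ := fun p => if p.2 ≠ 0 ∧ |p.1| ≤ |p.1 + p.2 * (M:ℤ)| then
      (1 + |(p.1:ℝ)|) ^ (-s) * (|((p.1 + p.2 * (M:ℤ) : ℤ):ℝ)| ^ r * ‖cg (p.1 + p.2 * (M:ℤ))‖)
      else 0 with hG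
  have hF0 : ∀ p, 0 ≤ F p := fun p => by
    simp only [hF]; positivity
  have hG0 : ∀ p, 0 ≤ G p := fun p => by
    simp only [hG]; split
    · positivity
    · exact le_rfl
  -- pointwise domination
  have hpoint : ∀ p : ℤ × ℤ, (if p.2 ≠ 0 ∧ |p.1| ≤ |p.1 + p.2 * (M:ℤ)| then
      ‖cf p.1‖ * ‖cg (p.1 + p.2 * (M:ℤ))‖ else 0) ≤ (2:ℝ)^r * (M:ℝ)^(-r) * (F p * G p) := by
    rintro ⟨k, j⟩
    by_cases hcond : j ≠ 0 ∧ |k| ≤ |k + j * (M:ℤ)|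
    · obtain ⟨hj, hkl⟩ := hcond
      set l : ℤ := k + j * (M:ℤ) with hl
      simp only [if_pos (⟨hj, hkl⟩ : j ≠ 0 ∧ |k| ≤ |l|)]
      have hGval : G (k, j) = (1 + |(k:ℝ)|) ^ (-s) * (|(l:ℝ)| ^ r * ‖cg l‖) := by
        simp only [hG]; exact if_pos (⟨hj, hkl⟩ : j ≠ 0 ∧ |k| ≤ |l|)
      rw [hGval]
      -- key scalar inequality : 1 ≤ 2^r M^{-r} |j|^{-r} |l|^r
      have hjM : (M:ℤ) * |j| ≤ 2 * |l| := by
        have h1 : |j * (M:ℤ)| ≤ |l| + |k| := by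
          have he : j * (M:ℤ) = l - k := by rw [hl]; ring
          rw [he]
          exact abs_sub _ _
        have h2 : |j * (M:ℤ)| = (M:ℤ) * |j| := by
          rw [abs_mul, _root_.abs_of_nonneg (by positivity : (0:ℤ) ≤ (M:ℤ))]; ring
        rw [h2] at h1
        linarith
      have hjR : (1:ℝ) ≤ |(j:ℝ)| := by exact_mod_cast Int.one_le_abs hj
      have hlR : (0:ℝ) < |(l:ℝ)| := by
        have hlne : l ≠ 0 := by
          intro h0
          rw [h0] at hjM
          simp only [abs_zero, mul_zero] at hjM
          have hpos : (0:ℤ) < (M:ℤ) * |j| :=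
            mul_pos (by exact_mod_cast hM) (abs_pos.mpr hj)
          linarith
        have h1 : (1:ℝ) ≤ |(l:ℝ)| := by exact_mod_cast Int.one_le_abs hlne
        linarith
      have hfrac : (1:ℝ) ≤ 2 * |(l:ℝ)| / ((M:ℝ) * |(j:ℝ)|) := by
        rw [le_div_iff₀ (by positivity)]
        have hcast : ((M:ℝ)) * |(j:ℝ)| ≤ 2 * |(l:ℝ)| := by exact_mod_cast hjM
        linarith
      have hscal : (1:ℝ) ≤ (2:ℝ)^r * (M:ℝ)^(-r) * (|(j:ℝ)| ^ (-r) * |(l:ℝ)| ^ r) := by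
        have h1 : (1:ℝ) ≤ (2 * |(l:ℝ)| / ((M:ℝ) * |(j:ℝ)|)) ^ r :=
          Real.one_le_rpow hfrac hr0.le
        have h2 : (2 * |(l:ℝ)| / ((M:ℝ) * |(j:ℝ)|)) ^ r
            = (2:ℝ)^r * (M:ℝ)^(-r) * (|(j:ℝ)| ^ (-r) * |(l:ℝ)| ^ r) := by
          rw [Real.div_rpow (by positivity) (by positivity),
            Real.mul_rpow (by norm_num) (abs_nonneg _),
            Real.mul_rpow (by positivity) (abs_nonneg _),
            Real.rpow_neg (by positivity), Real.rpow_neg (abs_nonneg _)]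
          field_simp
        rw [h2] at h1; exact h1
      -- assemble
      have hprod : F (k, j) * ((1 + |(k:ℝ)|) ^ (-s) * (|(l:ℝ)| ^ r * ‖cg l‖))
          = (|(j:ℝ)| ^ (-r) * |(l:ℝ)| ^ r) * (‖cf k‖ * ‖cg l‖) := by
        have hcancel : (1 + |(k:ℝ)|) ^ s * (1 + |(k:ℝ)|) ^ (-s) = 1 := by
          rw [← Real.rpow_add (by positivity)]
          simp
        simp only [hF]
        calc (1 + |(k:ℝ)|) ^ s * ‖cf k‖ * |(j:ℝ)| ^ (-r)
              * ((1 + |(k:ℝ)|) ^ (-s) * (|(l:ℝ)| ^ r * ‖cg l‖))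
            = ((1 + |(k:ℝ)|) ^ s * (1 + |(k:ℝ)|) ^ (-s))
              * (|(j:ℝ)| ^ (-r) * |(l:ℝ)| ^ r * (‖cf k‖ * ‖cg l‖)) := by ring
          _ = (|(j:ℝ)| ^ (-r) * |(l:ℝ)| ^ r) * (‖cf k‖ * ‖cg l‖) := by rw [hcancel]; ring
      calc ‖cf k‖ * ‖cg l‖ = 1 * (‖cf k‖ * ‖cg l‖) := (one_mul _).symm
        _ ≤ ((2:ℝ)^r * (M:ℝ)^(-r) * (|(j:ℝ)| ^ (-r) * |(l:ℝ)| ^ r)) * (‖cf k‖ * ‖cg l‖) :=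
            mul_le_mul_of_nonneg_right hscal (by positivity)
        _ = (2:ℝ)^r * (M:ℝ)^(-r) * (F (k, j) * ((1 + |(k:ℝ)|) ^ (-s) * (|(l:ℝ)| ^ r * ‖cg l‖))) := by
            rw [hprod]; ring
    · simp only [if_neg hcond]
      have := mul_nonneg (hF0 (k,j)) (hG0 (k,j))
      positivity
  -- summability and bound for F^2
  have hFsq_eq : ∀ p : ℤ × ℤ, F p ^ 2
      = ((1 + |(p.1:ℝ)|) ^ s * ‖cf p.1‖) ^ 2 * |(p.2:ℝ)| ^ (-(2*r)) := by
    intro p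
    simp only [hF, mul_pow]
    rw [rpow_two_eq (abs_nonneg _)]
    ring_nf
  have hv := weight_summable hs0 hcfs
  have hFsq_sum : Summable (fun p : ℤ × ℤ => F p ^ 2) := by
    refine ((hv.mul_of_nonneg hZsum (fun k => sq_nonneg _)
      (fun j => Real.rpow_nonneg (abs_nonneg _) _)).congr (fun p => (hFsq_eq p).symm))
  have hFsq_tsum : ∑' p : ℤ × ℤ, F p ^ 2 ≤ ((2:ℝ)^(2*s) * sobolevNorm s cf ^ 2) * Z := by
    have h1 : ∑' p : ℤ × ℤ, F p ^ 2
        = (∑' k : ℤ, ((1 + |(k:ℝ)|) ^ s * ‖cf k‖) ^ 2) * Z := by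
      rw [show ∑' p : ℤ × ℤ, F p ^ 2
          = ∑' p : ℤ × ℤ, ((1 + |(p.1:ℝ)|) ^ s * ‖cf p.1‖) ^ 2 * |(p.2:ℝ)| ^ (-(2*r))
          from tsum_congr hFsq_eq]
      rw [hZdef]
      exact (tsum_mul_tsum_of_summable_norm
        (hv.abs.congr (fun k => (Real.norm_eq_abs _).symm))
        (hZsum.abs.congr (fun j => (Real.norm_eq_abs _).symm))).symm
    rw [h1]
    have h2 := weight_tsum_le hs0 hcfs
    exact mul_le_mul_of_nonneg_right h2 hZpos.le
  -- summability and bound for G^2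
  set β : ℤ → ℝ := fun l => |(l:ℝ)| ^ r * ‖cg l‖ with hβ
  have hβsq_le : ∀ l : ℤ, β l ^ 2 ≤ w r cg l := by
    intro l
    rcases eq_or_ne l 0 with rfl | hl
    · simp only [hβ, w, if_pos rfl]
      rw [show |((0:ℤ):ℝ)| = 0 by norm_num, Real.zero_rpow (by positivity : r ≠ 0)]
      simp [sq_nonneg]
    · simp only [hβ, w, if_neg hl, mul_pow]
      rw [rpow_two_eq (abs_nonneg _)]
  have hβsq_sum : Summable (fun l : ℤ => β l ^ 2) :=
    Summable.of_nonneg_of_le (fun l => sq_nonneg _) hβsq_le (w_summable hcg)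
  have hβsq_tsum : ∑' l : ℤ, β l ^ 2 ≤ sobolevNorm r cg ^ 2 := by
    calc ∑' l : ℤ, β l ^ 2 ≤ ∑' l : ℤ, w r cg l :=
          Summable.tsum_le_tsum hβsq_le hβsq_sum (w_summable hcg)
      _ = sobolevNorm r cg ^ 2 := w_tsum hcg
  -- the dominating function for G^2, in shifted coordinates
  set H : ℤ × ℤ → ℝ := fun q => (1 + |((q.1 - q.2 * (M:ℤ) : ℤ):ℝ)|) ^ (-(2*s)) * β q.1 ^ 2 with hH
  have hHfib : ∀ l : ℤ, Summable (fun j : ℤ => H (l, j)) := by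
    intro l
    have := ((hK M hM l).1).mul_right (β l ^ 2)
    refine this.congr (fun j => ?_)
    simp only [hH]
    congr 2
    push_cast
    ring
  have hHfib_tsum : ∀ l : ℤ, ∑' j : ℤ, H (l, j) ≤ K * β l ^ 2 := by
    intro l
    have h1 : ∑' j : ℤ, H (l, j)
        = (∑' j : ℤ, (1 + |(l:ℝ) - j * (M:ℝ)|) ^ (-(2*s))) * β l ^ 2 := by
      rw [← tsum_mul_right]
      refine tsum_congr (fun j => ?_)
      simp only [hH]
      congr 2
      push_cast
      ring
    rw [h1]
    exact mul_le_mul_of_nonneg_right ((hK M hM l).2) (sq_nonneg _)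
  have hH0 : ∀ q, 0 ≤ H q := fun q => by
    simp only [hH]; positivity
  have hHsum : Summable H := by
    refine (summable_prod_of_nonneg hH0).2 ⟨hHfib, ?_⟩
    refine Summable.of_nonneg_of_le (fun l => tsum_nonneg (fun j => hH0 _)) hHfib_tsum
      (hβsq_sum.mul_left K)
  have hHtsum : ∑' q : ℤ × ℤ, H q ≤ K * sobolevNorm r cg ^ 2 := by
    rw [Summable.tsum_prod' hHsum hHfib]
    calc ∑' l : ℤ, ∑' j : ℤ, H (l, j) ≤ ∑' l : ℤ, K * β l ^ 2 := by
          refine Summable.tsum_le_tsum hHfib_tsum ?_ (hβsq_sum.mul_left K)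
          exact (summable_prod_of_nonneg hH0).1 hHsum |>.2.congr (fun l => rfl)
      _ = K * ∑' l : ℤ, β l ^ 2 := tsum_mul_left
      _ ≤ K * sobolevNorm r cg ^ 2 := mul_le_mul_of_nonneg_left hβsq_tsum hK0.le
  -- transfer H to G-coordinates
  set e : ℤ × ℤ ≃ ℤ × ℤ :=
    ⟨fun p => (p.1 + p.2 * (M:ℤ), p.2), fun q => (q.1 - q.2 * (M:ℤ), q.2),
      fun p => by simp, fun q => by simp⟩ with he
  have hGsq_le : ∀ p : ℤ × ℤ, G p ^ 2 ≤ H (e p) := by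
    rintro ⟨k, j⟩
    by_cases hcond : j ≠ 0 ∧ |k| ≤ |k + j * (M:ℤ)|
    · simp only [hG, hH, he, if_pos hcond, mul_pow, Equiv.coe_fn_mk]
      have h1 : (k + j * (M:ℤ)) - j * (M:ℤ) = k := by ring
      rw [h1]
      rw [rpow_two_eq (by positivity : (0:ℝ) ≤ 1 + |(k:ℝ)|), hβ]
      have : (-s) * 2 = -(2*s) := by ring
      rw [show (2:ℝ) * (-s) = -(2*s) by ring]
      simp only [mul_pow]
      ring_nf
      exact le_rfl
    · simp only [hG, if_neg hcond]
      rw [show ((0:ℝ))^2 = 0 by norm_num]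
      exact hH0 _
  have hGsq_sum : Summable (fun p : ℤ × ℤ => G p ^ 2) :=
    Summable.of_nonneg_of_le (fun p => sq_nonneg _) hGsq_le (hHsum.comp_injective e.injective)
  have hGsq_tsum : ∑' p : ℤ × ℤ, G p ^ 2 ≤ K * sobolevNorm r cg ^ 2 := by
    calc ∑' p : ℤ × ℤ, G p ^ 2 ≤ ∑' p : ℤ × ℤ, H (e p) :=
          Summable.tsum_le_tsum hGsq_le hGsq_sum (hHsum.comp_injective e.injective)
      _ = ∑' q : ℤ × ℤ, H q := e.tsum_eq H
      _ ≤ K * sobolevNorm r cg ^ 2 := hHtsum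
  -- put everything together
  have hFG_sum : Summable (fun p : ℤ × ℤ => F p * G p) := summable_mul_sq hFsq_sum hGsq_sum
  have hT_sum : Summable (fun p : ℤ × ℤ =>
      (if p.2 ≠ 0 ∧ |p.1| ≤ |p.1 + p.2 * (M:ℤ)| then ‖cf p.1‖ * ‖cg (p.1 + p.2 * (M:ℤ))‖ else 0)) := by
    refine Summable.of_nonneg_of_le (fun p => ?_) hpoint ((hFG_sum.mul_left _))
    split
    · positivity
    · exact le_rfl
  refine ⟨hT_sum, ?_⟩
  calc ∑' p : ℤ × ℤ, (if p.2 ≠ 0 ∧ |p.1| ≤ |p.1 + p.2 * (M:ℤ)| then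
          ‖cf p.1‖ * ‖cg (p.1 + p.2 * (M:ℤ))‖ else 0)
      ≤ ∑' p : ℤ × ℤ, (2:ℝ)^r * (M:ℝ)^(-r) * (F p * G p) :=
        Summable.tsum_le_tsum hpoint hT_sum (hFG_sum.mul_left _)
    _ = (2:ℝ)^r * (M:ℝ)^(-r) * ∑' p : ℤ × ℤ, F p * G p := tsum_mul_left
    _ ≤ (2:ℝ)^r * (M:ℝ)^(-r) *
        (Real.sqrt (∑' p : ℤ × ℤ, F p ^ 2) * Real.sqrt (∑' p : ℤ × ℤ, G p ^ 2)) := by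
        refine mul_le_mul_of_nonneg_left (tsum_cs hF0 hG0 hFsq_sum hGsq_sum) (by positivity)
    _ ≤ (2:ℝ)^r * ((2:ℝ)^s * Real.sqrt Z) * Real.sqrt K * (M:ℝ)^(-r)
        * (sobolevNorm s cf * sobolevNorm r cg) := by
        have h1 : Real.sqrt (∑' p : ℤ × ℤ, F p ^ 2)
            ≤ (2:ℝ)^s * Real.sqrt Z * sobolevNorm s cf := by
          refine (Real.sqrt_le_sqrt hFsq_tsum).trans ?_
          rw [show ((2:ℝ)^(2*s) * sobolevNorm s cf ^ 2) * Z
              = ((2:ℝ)^s * Real.sqrt Z * sobolevNorm s cf)^2 by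
            rw [mul_pow, mul_pow, Real.sq_sqrt hZpos.le, rpow_two_eq (by norm_num : (0:ℝ) ≤ 2)]
            ring]
          exact (Real.sqrt_sq (mul_nonneg (by positivity) (sobolevNorm_nonneg _ _))).le
        have h2 : Real.sqrt (∑' p : ℤ × ℤ, G p ^ 2) ≤ Real.sqrt K * sobolevNorm r cg := by
          refine (Real.sqrt_le_sqrt hGsq_tsum).trans ?_
          rw [show K * sobolevNorm r cg ^ 2 = (Real.sqrt K * sobolevNorm r cg)^2 by
            rw [mul_pow, Real.sq_sqrt hK0.le]]
          exact (Real.sqrt_sq (mul_nonneg (Real.sqrt_nonneg _) (sobolevNorm_nonneg _ _))).le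
        have h3 := mul_le_mul h1 h2 (Real.sqrt_nonneg _)
          (mul_nonneg (by positivity) (sobolevNorm_nonneg _ _))
        calc (2:ℝ)^r * (M:ℝ)^(-r) *
            (Real.sqrt (∑' p : ℤ × ℤ, F p ^ 2) * Real.sqrt (∑' p : ℤ × ℤ, G p ^ 2))
            ≤ (2:ℝ)^r * (M:ℝ)^(-r) *
              (((2:ℝ)^s * Real.sqrt Z * sobolevNorm s cf) * (Real.sqrt K * sobolevNorm r cg)) :=
              mul_le_mul_of_nonneg_left h3 (by positivity)
          _ = (2:ℝ)^r * ((2:ℝ)^s * Real.sqrt Z) * Real.sqrt K * (M:ℝ)^(-r)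
              * (sobolevNorm s cf * sobolevNorm r cg) := by ring

/-- Full aliasing-sum estimate. -/
lemma core {r s : ℝ} (hs : 1/2 < s) (hrs : s < r) :
    ∃ C : ℝ, 0 < C ∧ ∀ (M : ℕ), 0 < M → ∀ (cf cg : ℤ → ℂ), InSobolev r cf → InSobolev r cg →
      (Summable fun p : ℤ × ℤ =>
        (if p.2 = 0 then 0 else ‖cf p.1‖ * ‖cg (p.1 + p.2 * (M:ℤ))‖)) ∧
      ∑' p : ℤ × ℤ, (if p.2 = 0 then 0 else ‖cf p.1‖ * ‖cg (p.1 + p.2 * (M:ℤ))‖)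
        ≤ C * (M:ℝ) ^ (-r) * (sobolevNorm r cf * sobolevNorm s cg
            + sobolevNorm s cf * sobolevNorm r cg) := by
  obtain ⟨C1, hC10, hC1⟩ := core1 hs hrs
  refine ⟨C1, hC10, ?_⟩
  intro M hM cf cg hcf hcg
  obtain ⟨hS1, hB1⟩ := hC1 M hM cf cg hcf hcg
  obtain ⟨hS1', hB1'⟩ := hC1 M hM cg cf hcg hcf
  set T1 : ℤ × ℤ → ℝ := fun p =>
    if p.2 ≠ 0 ∧ |p.1| ≤ |p.1 + p.2 * (M:ℤ)| then ‖cf p.1‖ * ‖cg (p.1 + p.2 * (M:ℤ))‖ else 0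
    with hT1
  set T2 : ℤ × ℤ → ℝ := fun p =>
    if p.2 ≠ 0 ∧ ¬ (|p.1| ≤ |p.1 + p.2 * (M:ℤ)|) then ‖cf p.1‖ * ‖cg (p.1 + p.2 * (M:ℤ))‖ else 0
    with hT2
  set T1' : ℤ × ℤ → ℝ := fun q =>
    if q.2 ≠ 0 ∧ |q.1| ≤ |q.1 + q.2 * (M:ℤ)| then ‖cg q.1‖ * ‖cf (q.1 + q.2 * (M:ℤ))‖ else 0
    with hT1'
  have hT1'0 : ∀ q, 0 ≤ T1' q := fun q => by
    simp only [hT1']; split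
    · positivity
    · exact le_rfl
  set σ : ℤ × ℤ ≃ ℤ × ℤ :=
    ⟨fun p => (p.1 + p.2 * (M:ℤ), -p.2), fun p => (p.1 + p.2 * (M:ℤ), -p.2),
      fun p => by simp, fun p => by simp⟩ with hσ
  have hT2σ : ∀ q : ℤ × ℤ, T2 (σ q) ≤ T1' q := by
    rintro ⟨l, j⟩
    simp only [hT2, hT1', hσ, Equiv.coe_fn_mk]
    have harg : l + j * (M:ℤ) + (-j) * (M:ℤ) = l := by ring
    by_cases hcond : (-j ≠ 0 ∧ ¬ (|l + j * (M:ℤ)| ≤ |l + j * (M:ℤ) + (-j) * (M:ℤ)|))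
    · rw [if_pos hcond]
      obtain ⟨hj, hlt⟩ := hcond
      rw [harg] at hlt ⊢
      have hcond2 : j ≠ 0 ∧ |l| ≤ |l + j * (M:ℤ)| := ⟨by omega, by omega⟩
      rw [if_pos hcond2]
      exact le_of_eq (mul_comm _ _)
    · rw [if_neg hcond]
      exact hT1'0 ⟨l, j⟩
  have hT2σ_sum : Summable (fun q => T2 (σ q)) :=
    Summable.of_nonneg_of_le (fun q => by
      simp only [hT2]; split
      · positivity
      · exact le_rfl) hT2σ hS1'
  have hT2_sum : Summable T2 := σ.summable_iff.mp hT2σ_sum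
  have hT2_tsum : ∑' p : ℤ × ℤ, T2 p
      ≤ C1 * (M:ℝ) ^ (-r) * (sobolevNorm s cg * sobolevNorm r cf) := by
    calc ∑' p : ℤ × ℤ, T2 p = ∑' q : ℤ × ℤ, T2 (σ q) := (σ.tsum_eq T2).symm
      _ ≤ ∑' q : ℤ × ℤ, T1' q := Summable.tsum_le_tsum hT2σ hT2σ_sum hS1'
      _ ≤ C1 * (M:ℝ) ^ (-r) * (sobolevNorm s cg * sobolevNorm r cf) := hB1'
  have hsplit : ∀ p : ℤ × ℤ, (if p.2 = 0 then 0 else ‖cf p.1‖ * ‖cg (p.1 + p.2 * (M:ℤ))‖)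
      = T1 p + T2 p := by
    rintro ⟨k, j⟩
    simp only [hT1, hT2]
    by_cases hj : j = 0
    · simp [hj]
    · by_cases hle : |k| ≤ |k + j * (M:ℤ)|
      · rw [if_neg hj, if_pos ⟨hj, hle⟩, if_neg (by tauto)]
        ring
      · rw [if_neg hj, if_neg (by tauto), if_pos ⟨hj, hle⟩]
        ring
  have hT_sum : Summable (fun p : ℤ × ℤ =>
      (if p.2 = 0 then 0 else ‖cf p.1‖ * ‖cg (p.1 + p.2 * (M:ℤ))‖)) :=
    (hS1.add hT2_sum).congr (fun p => (hsplit p).symm)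
  refine ⟨hT_sum, ?_⟩
  calc ∑' p : ℤ × ℤ, (if p.2 = 0 then 0 else ‖cf p.1‖ * ‖cg (p.1 + p.2 * (M:ℤ))‖)
      = ∑' p : ℤ × ℤ, (T1 p + T2 p) := tsum_congr hsplit
    _ = (∑' p : ℤ × ℤ, T1 p) + ∑' p : ℤ × ℤ, T2 p := Summable.tsum_add hS1 hT2_sum
    _ ≤ C1 * (M:ℝ) ^ (-r) * (sobolevNorm s cf * sobolevNorm r cg)
        + C1 * (M:ℝ) ^ (-r) * (sobolevNorm s cg * sobolevNorm r cf) := add_le_add hB1 hT2_tsum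
    _ = C1 * (M:ℝ) ^ (-r) * (sobolevNorm r cf * sobolevNorm s cg
        + sobolevNorm s cf * sobolevNorm r cg) := by ring

/-! ### Exponentials -/

noncomputable def E (n : ℤ) (x : ℝ) : ℂ := Complex.exp (2 * Real.pi * Complex.I * n * x)

lemma E_eq (n : ℤ) (x : ℝ) : E n x = Complex.exp (((2 * Real.pi * n * x : ℝ) : ℂ) * Complex.I) := by
  unfold E; congr 1; push_cast; ring

lemma norm_E (n : ℤ) (x : ℝ) : ‖E n x‖ = 1 := by
  rw [E_eq, Complex.norm_exp_ofReal_mul_I]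

lemma E_mul (a b : ℤ) (x : ℝ) : E a x * E b x = E (a + b) x := by
  unfold E; rw [← Complex.exp_add]; congr 1; push_cast; ring

lemma E_zero (x : ℝ) : E 0 x = 1 := by
  unfold E; norm_num

lemma conj_E (n : ℤ) (x : ℝ) : (starRingEnd ℂ) (E n x) = E (-n) x := by
  rw [E_eq n x, ← Complex.exp_conj, E_eq]
  congr 1
  simp only [map_mul, Complex.conj_ofReal, Complex.conj_I]
  push_cast
  ring

lemma continuous_E (n : ℤ) : Continuous (fun x : ℝ => E n x) := by
  unfold E
  fun_prop

lemma integral_E (n : ℤ) : (∫ x in (0:ℝ)..1, E n x) = if n = 0 then 1 else 0 := by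
  rcases eq_or_ne n 0 with rfl | hn
  · simp only [if_pos rfl]
    have : ∀ x : ℝ, E 0 x = 1 := E_zero
    rw [intervalIntegral.integral_congr (fun x _ => this x)]
    simp
  · rw [if_neg hn]
    have hc : (2 * (Real.pi:ℂ) * Complex.I * n) ≠ 0 := by
      have h1 : ((Real.pi:ℂ)) ≠ 0 := Complex.ofReal_ne_zero.mpr Real.pi_ne_zero
      have h2 : ((n:ℂ)) ≠ 0 := Int.cast_ne_zero.mpr hn
      simp [Complex.I_ne_zero, h1, h2]
    have heq : ∀ x : ℝ, E n x = Complex.exp ((2 * (Real.pi:ℂ) * Complex.I * n) * x) := by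
      intro x; unfold E; ring_nf
    rw [intervalIntegral.integral_congr (fun x _ => heq x)]
    rw [integral_exp_mul_complex hc]
    have h1 : (2 * (Real.pi:ℂ) * Complex.I * n) * (1:ℝ) = (n:ℂ) * (2 * Real.pi * Complex.I) := by
      push_cast; ring
    have h2 : (2 * (Real.pi:ℂ) * Complex.I * n) * (0:ℝ) = 0 := by
      push_cast; ring
    rw [h1, h2, Complex.exp_int_mul_two_pi_mul_I, Complex.exp_zero]
    simp

lemma discrete_sum_E (M : ℕ) (hM : 0 < M) (xt : ℝ) (n : ℤ) :
    ∑ m ∈ Finset.Icc 1 M, E n (xt + (m:ℝ)/M)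
      = if (M:ℤ) ∣ n then (M:ℂ) * E n xt else 0 := by
  have hMC : ((M:ℂ)) ≠ 0 := Nat.cast_ne_zero.mpr hM.ne'
  set ω : ℂ := Complex.exp (2 * Real.pi * Complex.I * n / M) with hω
  have hterm : ∀ m : ℕ, E n (xt + (m:ℝ)/M) = E n xt * ω ^ m := by
    intro m
    rw [hω, ← Complex.exp_nat_mul]
    unfold E
    rw [← Complex.exp_add]
    congr 1
    push_cast
    field_simp
  have hωM : ω ^ M = 1 := by
    rw [hω, ← Complex.exp_nat_mul]
    have : (M:ℂ) * (2 * Real.pi * Complex.I * n / M) = (n:ℂ) * (2 * Real.pi * Complex.I) := by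
      field_simp
    rw [this, Complex.exp_int_mul_two_pi_mul_I]
  have hsum : ∑ m ∈ Finset.Icc 1 M, E n (xt + (m:ℝ)/M) = E n xt * ∑ m ∈ Finset.Icc 1 M, ω ^ m := by
    rw [Finset.mul_sum]
    exact Finset.sum_congr rfl (fun m _ => hterm m)
  rw [hsum]
  by_cases hdvd : (M:ℤ) ∣ n
  · rw [if_pos hdvd]
    obtain ⟨q, hq⟩ := hdvd
    have hω1 : ω = 1 := by
      rw [hω]
      have : 2 * (Real.pi:ℂ) * Complex.I * n / M = (q:ℂ) * (2 * Real.pi * Complex.I) := by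
        rw [hq]
        push_cast
        field_simp
      rw [this, Complex.exp_int_mul_two_pi_mul_I]
    simp [hω1, Nat.card_Icc]
    ring
  · rw [if_neg hdvd]
    have hω1 : ω ≠ 1 := by
      intro hcon
      rw [hω, Complex.exp_eq_one_iff] at hcon
      obtain ⟨k, hk⟩ := hcon
      have h2πI : (2 * (Real.pi:ℂ) * Complex.I) ≠ 0 := by
        have h1 : ((Real.pi:ℂ)) ≠ 0 := Complex.ofReal_ne_zero.mpr Real.pi_ne_zero
        simp [Complex.I_ne_zero, h1]
      have hnk : (n:ℂ) = (k:ℂ) * M := by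
        have h3 : 2 * (Real.pi:ℂ) * Complex.I * n = (k:ℂ) * (2 * Real.pi * Complex.I) * M := by
          field_simp at hk
          linear_combination (2 * (Real.pi:ℂ) * Complex.I) * hk
        have h4 : (2 * (Real.pi:ℂ) * Complex.I) * (n:ℂ)
            = (2 * (Real.pi:ℂ) * Complex.I) * ((k:ℂ) * M) := by
          linear_combination h3
        exact mul_left_cancel₀ h2πI h4
      have : n = k * M := by exact_mod_cast hnk
      exact hdvd ⟨k, by rw [this]; ring⟩
    have hIcc : ∑ m ∈ Finset.Icc 1 M, ω ^ m = ω * ∑ i ∈ Finset.range M, ω ^ i := by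
      have h1 : Finset.Icc 1 M = Finset.Ico 1 (M+1) := by
        rw [← Finset.Ico_add_one_right_eq_Icc]
      rw [h1, Finset.sum_Ico_eq_sum_range]
      simp only [Nat.add_sub_cancel]
      rw [Finset.mul_sum]
      exact Finset.sum_congr rfl (fun i _ => by rw [pow_add, pow_one]; try ring)
    rw [hIcc, geom_sum_eq hω1, hωM]
    simp

/-! ### Identities -/

lemma summable_term (cf : ℤ → ℂ) (hcf1 : Summable fun k => ‖cf k‖) (x : ℝ) :
    Summable fun k : ℤ => ‖cf k * E k x‖ :=
  hcf1.congr fun k => by rw [norm_mul, norm_E, mul_one]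

lemma prod_expand (cf cg : ℤ → ℂ) (hcf1 : Summable fun k => ‖cf k‖)
    (hcg1 : Summable fun k => ‖cg k‖) (x : ℝ) :
    (starRingEnd ℂ) (∑' k : ℤ, cf k * E k x) * (∑' k : ℤ, cg k * E k x)
      = ∑' q : ℤ × ℤ, (starRingEnd ℂ) (cf q.1) * cg q.2 * E (q.2 - q.1) x := by
  have h1 : (starRingEnd ℂ) (∑' k : ℤ, cf k * E k x)
      = ∑' k : ℤ, (starRingEnd ℂ) (cf k) * E (-k) x := by
    rw [starRingEnd_apply, tsum_star]
    exact tsum_congr fun k => by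
      rw [← starRingEnd_apply, map_mul, conj_E]
  have hA : Summable fun k : ℤ => ‖(starRingEnd ℂ) (cf k) * E (-k) x‖ :=
    hcf1.congr fun k =>
      (by rw [norm_mul, norm_E, RCLike.norm_conj, mul_one] :
        ‖(starRingEnd ℂ) (cf k) * E (-k) x‖ = ‖cf k‖).symm
  rw [h1, tsum_mul_tsum_of_summable_norm hA (summable_term cg hcg1 x)]
  exact tsum_congr fun q => by
    rw [mul_mul_mul_comm, E_mul, show -q.1 + q.2 = q.2 - q.1 from by ring]

/-- diagonal re-indexing equivalence -/
def eDelta : ℤ × ℤ ≃ ℤ × ℤ :=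
  ⟨fun d => (d.1, d.1 + d.2), fun q => (q.1, q.2 - q.1),
    fun d => by simp, fun q => by simp⟩

lemma diag_tsum (h : ℤ → ℂ) :
    ∑' d : ℤ × ℤ, (if d.2 = 0 then h d.1 else 0) = ∑' k : ℤ, h k := by
  have hinj : Function.Injective (fun k : ℤ => ((k, 0) : ℤ × ℤ)) := by
    intro a b hab
    simpa using hab
  have hsupp : Function.support (fun d : ℤ × ℤ => (if d.2 = 0 then h d.1 else 0))
      ⊆ Set.range (fun k : ℤ => ((k, 0) : ℤ × ℤ)) := by
    intro d hd
    simp only [Function.mem_support] at hd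
    by_cases h0 : d.2 = 0
    · exact ⟨d.1, by rw [← h0]⟩
    · exact absurd (if_neg h0) hd
  rw [← hinj.tsum_eq hsupp]
  simp

lemma norm_term_eq (cf cg : ℤ → ℂ) (n : ℤ) (x : ℝ) (a b : ℤ) :
    ‖(starRingEnd ℂ) (cf a) * cg b * E n x‖ = ‖cf a‖ * ‖cg b‖ := by
  rw [norm_mul, norm_mul, norm_E, RCLike.norm_conj, mul_one]

lemma exact_eq (cf cg : ℤ → ℂ) (hcf1 : Summable fun k => ‖cf k‖)
    (hcg1 : Summable fun k => ‖cg k‖) :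
    (∫ x in (0:ℝ)..1,
        (starRingEnd ℂ) (∑' k : ℤ, cf k * E k x) * (∑' k : ℤ, cg k * E k x))
      = ∑' k : ℤ, (starRingEnd ℂ) (cf k) * cg k := by
  have hPsum : Summable fun q : ℤ × ℤ => ‖cf q.1‖ * ‖cg q.2‖ :=
    hcf1.mul_of_nonneg hcg1 (fun k => norm_nonneg _) (fun k => norm_nonneg _)
  calc (∫ x in (0:ℝ)..1,
        (starRingEnd ℂ) (∑' k : ℤ, cf k * E k x) * (∑' k : ℤ, cg k * E k x))
      = ∫ x in Set.Ioc (0:ℝ) 1, ∑' q : ℤ × ℤ,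
          (starRingEnd ℂ) (cf q.1) * cg q.2 * E (q.2 - q.1) x := by
        rw [intervalIntegral.integral_of_le (by norm_num : (0:ℝ) ≤ 1)]
        exact MeasureTheory.integral_congr_ae (Filter.Eventually.of_forall
          (fun x => prod_expand cf cg hcf1 hcg1 x))
    _ = ∑' q : ℤ × ℤ, ∫ x in Set.Ioc (0:ℝ) 1,
          (starRingEnd ℂ) (cf q.1) * cg q.2 * E (q.2 - q.1) x := by
        refine MeasureTheory.integral_tsum (fun q => ?_) ?_
        · exact ((continuous_const.mul (continuous_E (q.2 - q.1))).aestronglyMeasurable)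
        · have hconst : ∀ q : ℤ × ℤ, (∫⁻ x in Set.Ioc (0:ℝ) 1,
              ‖(starRingEnd ℂ) (cf q.1) * cg q.2 * E (q.2 - q.1) x‖₊)
              = ((‖cf q.1‖₊ * ‖cg q.2‖₊ : NNReal) : ENNReal) := by
            intro q
            have h1 : ∀ x : ℝ, (‖(starRingEnd ℂ) (cf q.1) * cg q.2 * E (q.2 - q.1) x‖₊ : ENNReal)
                = ((‖cf q.1‖₊ * ‖cg q.2‖₊ : NNReal) : ENNReal) := by
              intro x
              congr 1
              ext
              push_cast
              exact norm_term_eq cf cg _ x _ _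
            rw [MeasureTheory.lintegral_congr h1, MeasureTheory.lintegral_const]
            rw [MeasureTheory.Measure.restrict_apply_univ, Real.volume_Ioc]
            norm_num
          simp only [enorm_eq_nnnorm]
          rw [tsum_congr hconst, ENNReal.tsum_coe_ne_top_iff_summable]
          refine NNReal.summable_coe.mp (hPsum.congr (fun q => ?_))
          push_cast
          rfl
    _ = ∑' q : ℤ × ℤ, (starRingEnd ℂ) (cf q.1) * cg q.2
          * (if q.2 - q.1 = 0 then 1 else 0) := by
        refine tsum_congr (fun q => ?_)
        rw [← intervalIntegral.integral_of_le (by norm_num : (0:ℝ) ≤ 1),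
          intervalIntegral.integral_const_mul, integral_E]
    _ = ∑' d : ℤ × ℤ, (if d.2 = 0 then (starRingEnd ℂ) (cf d.1) * cg d.1 else 0) := by
        rw [← (eDelta).tsum_eq]
        refine tsum_congr (fun d => ?_)
        show (starRingEnd ℂ) (cf d.1) * cg (d.1 + d.2) * (if d.1 + d.2 - d.1 = 0 then 1 else 0) = _
        rw [show d.1 + d.2 - d.1 = d.2 from by ring]
        split
        · rename_i h0
          rw [h0]
          simp
        · simp
    _ = ∑' k : ℤ, (starRingEnd ℂ) (cf k) * cg k :=
        diag_tsum (fun k => (starRingEnd ℂ) (cf k) * cg k)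

lemma disc_eq (M : ℕ) (hM : 0 < M) (xt : ℝ) (cf cg : ℤ → ℂ)
    (hcf1 : Summable fun k => ‖cf k‖) (hcg1 : Summable fun k => ‖cg k‖) :
    (1 / (M:ℂ)) * ∑ m ∈ Finset.Icc 1 M,
        (starRingEnd ℂ) (∑' k : ℤ, cf k * E k (xt + (m:ℝ)/M))
          * (∑' k : ℤ, cg k * E k (xt + (m:ℝ)/M))
      = ∑' p : ℤ × ℤ,
          (starRingEnd ℂ) (cf p.1) * cg (p.1 + p.2 * (M:ℤ)) * E (p.2 * (M:ℤ)) xt := by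
  have hMC : ((M:ℂ)) ≠ 0 := Nat.cast_ne_zero.mpr hM.ne'
  have hPsum : Summable fun q : ℤ × ℤ => ‖cf q.1‖ * ‖cg q.2‖ :=
    hcf1.mul_of_nonneg hcg1 (fun k => norm_nonneg _) (fun k => norm_nonneg _)
  have hterm_sum : ∀ x : ℝ, Summable (fun q : ℤ × ℤ =>
      (starRingEnd ℂ) (cf q.1) * cg q.2 * E (q.2 - q.1) x) := by
    intro x
    exact Summable.of_norm (hPsum.congr
      (fun q => (norm_term_eq cf cg _ x _ _).symm))
  calc (1 / (M:ℂ)) * ∑ m ∈ Finset.Icc 1 M,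
        (starRingEnd ℂ) (∑' k : ℤ, cf k * E k (xt + (m:ℝ)/M))
          * (∑' k : ℤ, cg k * E k (xt + (m:ℝ)/M))
      = (1 / (M:ℂ)) * ∑ m ∈ Finset.Icc 1 M, ∑' q : ℤ × ℤ,
          (starRingEnd ℂ) (cf q.1) * cg q.2 * E (q.2 - q.1) (xt + (m:ℝ)/M) := by
        congr 1
        exact Finset.sum_congr rfl (fun m _ => prod_expand cf cg hcf1 hcg1 _)
    _ = (1 / (M:ℂ)) * ∑' q : ℤ × ℤ, ∑ m ∈ Finset.Icc 1 M,
          (starRingEnd ℂ) (cf q.1) * cg q.2 * E (q.2 - q.1) (xt + (m:ℝ)/M) := by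
        congr 1
        exact (Summable.tsum_finsetSum (s := Finset.Icc 1 M)
          (f := fun (m : ℕ) (q : ℤ × ℤ) => (starRingEnd ℂ) (cf q.1) * cg q.2
            * E (q.2 - q.1) (xt + (m:ℝ)/M))
          (fun m _ => (hterm_sum (xt + (m:ℝ)/M)))).symm
    _ = ∑' q : ℤ × ℤ, (1 / (M:ℂ)) * ∑ m ∈ Finset.Icc 1 M,
          (starRingEnd ℂ) (cf q.1) * cg q.2 * E (q.2 - q.1) (xt + (m:ℝ)/M) :=
        (tsum_mul_left).symm
    _ = ∑' q : ℤ × ℤ, (starRingEnd ℂ) (cf q.1) * cg q.2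
          * (if (M:ℤ) ∣ (q.2 - q.1) then E (q.2 - q.1) xt else 0) := by
        refine tsum_congr (fun q => ?_)
        rw [← Finset.mul_sum, discrete_sum_E M hM xt (q.2 - q.1)]
        split
        · rw [show (1 / (M:ℂ)) * ((starRingEnd ℂ) (cf q.1) * cg q.2
              * ((M:ℂ) * E (q.2 - q.1) xt))
            = ((M:ℂ)/(M:ℂ)) * ((starRingEnd ℂ) (cf q.1) * cg q.2 * E (q.2 - q.1) xt)
            from by ring, div_self hMC, one_mul]
        · ring
    _ = ∑' d : ℤ × ℤ, (starRingEnd ℂ) (cf d.1) * cg (d.1 + d.2)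
          * (if (M:ℤ) ∣ d.2 then E d.2 xt else 0) := by
        rw [← (eDelta).tsum_eq]
        refine tsum_congr (fun d => ?_)
        show (starRingEnd ℂ) (cf d.1) * cg (d.1 + d.2)
            * (if (M:ℤ) ∣ (d.1 + d.2 - d.1) then E (d.1 + d.2 - d.1) xt else 0) = _
        rw [show d.1 + d.2 - d.1 = d.2 from by ring]
    _ = ∑' p : ℤ × ℤ,
          (starRingEnd ℂ) (cf p.1) * cg (p.1 + p.2 * (M:ℤ)) * E (p.2 * (M:ℤ)) xt := by
        have hMZ : ((M:ℤ)) ≠ 0 := by exact_mod_cast hM.ne'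
        have hinj : Function.Injective (fun p : ℤ × ℤ => ((p.1, p.2 * (M:ℤ)) : ℤ × ℤ)) := by
          rintro ⟨a1, a2⟩ ⟨b1, b2⟩ hab
          simp only [Prod.mk.injEq] at hab
          obtain ⟨h1, h2⟩ := hab
          exact Prod.ext h1 (mul_right_cancel₀ hMZ h2)
        have hsupp : Function.support (fun d : ℤ × ℤ => (starRingEnd ℂ) (cf d.1)
              * cg (d.1 + d.2) * (if (M:ℤ) ∣ d.2 then E d.2 xt else 0))
            ⊆ Set.range (fun p : ℤ × ℤ => ((p.1, p.2 * (M:ℤ)) : ℤ × ℤ)) := by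
          intro d hd
          simp only [Function.mem_support] at hd
          by_cases hdvd : (M:ℤ) ∣ d.2
          · obtain ⟨q, hq⟩ := hdvd
            exact ⟨(d.1, q), by rw [Prod.mk.injEq]; exact ⟨rfl, by rw [hq]; ring⟩⟩
          · rw [if_neg hdvd, mul_zero] at hd
            exact absurd rfl hd
        rw [← hinj.tsum_eq hsupp]
        refine tsum_congr (fun p => ?_)
        show (starRingEnd ℂ) (cf p.1) * cg (p.1 + p.2 * (M:ℤ))
            * (if (M:ℤ) ∣ (p.2 * (M:ℤ)) then E (p.2 * (M:ℤ)) xt else 0) = _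
        rw [if_pos (dvd_mul_left (M:ℤ) p.2)]

end DIPE

/-- for `r > s > 1/2` there exists `C_{r,s} > 0`, independent of `f, g, M`
(and of the offset `x̃`), such that for all 1-periodic `f, g ∈ H^r`, the equispaced
discrete inner product `⟨f,g⟩_M = (1/M) ∑_{m=1}^M conj(f(x̃+m/M)) g(x̃+m/M)` satisfies
`|⟨f,g⟩ − ⟨f,g⟩_M| ≤ C M^{-r} (‖f‖_r ‖g‖_s + ‖f‖_s ‖g‖_r)`. -/
theorem discrete_inner_product_error_equispaced (r s : ℝ) (hs : 1 / 2 < s) (hrs : s < r) :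
    ∃ C : ℝ, 0 < C ∧ ∀ (M : ℕ), 0 < M → ∀ (xt : ℝ), xt ∈ Set.Ico (0:ℝ) 1 →
      ∀ (f g : ℝ → ℂ) (cf cg : ℤ → ℂ),
      (∀ x : ℝ, f (x + 1) = f x) → (∀ x : ℝ, g (x + 1) = g x) →
      InSobolev r cf → InSobolev r cg →
      (∀ x : ℝ, f x = ∑' k : ℤ, cf k * Complex.exp (2 * Real.pi * Complex.I * k * x)) →
      (∀ x : ℝ, g x = ∑' k : ℤ, cg k * Complex.exp (2 * Real.pi * Complex.I * k * x)) →
      ‖(∫ x in (0:ℝ)..1, (starRingEnd ℂ) (f x) * g x)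
          - (1 / (M:ℂ)) * ∑ m ∈ Finset.Icc 1 M,
              (starRingEnd ℂ) (f (xt + (m:ℝ) / M)) * g (xt + (m:ℝ) / M)‖
        ≤ C * (M:ℝ) ^ (-r) * (sobolevNorm r cf * sobolevNorm s cg
            + sobolevNorm s cf * sobolevNorm r cg) := by
  obtain ⟨C, hC0, hC⟩ := DIPE.core hs hrs
  refine ⟨C, hC0, ?_⟩
  intro M hM xt hxt f g cf cg hfper hgper hcf hcg hf hg
  have hr2 : 1/2 < r := lt_trans hs hrs
  have hcf1 : Summable fun k : ℤ => ‖cf k‖ := DIPE.summable_norm_coeff hr2 hcf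
  have hcg1 : Summable fun k : ℤ => ‖cg k‖ := DIPE.summable_norm_coeff hr2 hcg
  obtain ⟨hTsum, hTbound⟩ := hC M hM cf cg hcf hcg
  have hfE : ∀ x : ℝ, f x = ∑' k : ℤ, cf k * DIPE.E k x := hf
  have hgE : ∀ x : ℝ, g x = ∑' k : ℤ, cg k * DIPE.E k x := hg
  simp only [hfE, hgE]
  rw [DIPE.exact_eq cf cg hcf1 hcg1, DIPE.disc_eq M hM xt cf cg hcf1 hcg1]
  set h2 : ℤ × ℤ → ℂ := fun p =>
    (starRingEnd ℂ) (cf p.1) * cg (p.1 + p.2 * (M:ℤ)) * DIPE.E (p.2 * (M:ℤ)) xt with hh2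
  have hnorm_h2 : ∀ p : ℤ × ℤ, ‖h2 p‖ = ‖cf p.1‖ * ‖cg (p.1 + p.2 * (M:ℤ))‖ :=
    fun p => DIPE.norm_term_eq cf cg _ xt _ _
  have hN0 : Summable (fun p : ℤ × ℤ => if p.2 = 0 then ‖cf p.1‖ * ‖cg p.1‖ else 0) := by
    have hdiag : Summable (fun k : ℤ => ‖cf k‖ * ‖cg k‖) := by
      have hB : ∀ k : ℤ, ‖cg k‖ ≤ ∑' i : ℤ, ‖cg i‖ :=
        fun k => Summable.le_tsum hcg1 k (fun i _ => norm_nonneg _)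
      refine Summable.of_nonneg_of_le (fun k => by positivity)
        (fun k => mul_le_mul_of_nonneg_left (hB k) (norm_nonneg _))
        (hcf1.mul_right _)
    have hinj : Function.Injective (fun k : ℤ => ((k, 0) : ℤ × ℤ)) :=
      fun a b hab => by simpa using hab
    refine (Function.Injective.summable_iff hinj ?_).mp ?_
    · intro p hp
      by_cases h0 : p.2 = 0
      · exact absurd ⟨p.1, Prod.ext rfl h0.symm⟩ hp
      · exact if_neg h0
    · exact hdiag.congr (fun k => by simp)
  have hnormsum : Summable (fun p : ℤ × ℤ => ‖h2 p‖) := by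
    refine (hTsum.add hN0).congr (fun p => ?_)
    rw [hnorm_h2]
    by_cases h0 : p.2 = 0
    · rw [if_pos h0, if_pos h0, zero_add, h0]
      simp
    · rw [if_neg h0, if_neg h0, add_zero]
  have hsum_h2 : Summable h2 := Summable.of_norm hnormsum
  have hsum_ite : Summable (fun p : ℤ × ℤ => if p.2 = 0 then h2 p else 0) := by
    refine Summable.of_norm (Summable.of_nonneg_of_le (fun p => norm_nonneg _)
      (fun p => ?_) hnormsum)
    by_cases h0 : p.2 = 0
    · rw [if_pos h0]
    · rw [if_neg h0]
      simp [norm_nonneg]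
  have hexact : ∑' k : ℤ, (starRingEnd ℂ) (cf k) * cg k
      = ∑' p : ℤ × ℤ, (if p.2 = 0 then h2 p else 0) := by
    rw [← DIPE.diag_tsum (fun k => (starRingEnd ℂ) (cf k) * cg k)]
    refine tsum_congr (fun p => ?_)
    by_cases h0 : p.2 = 0
    · rw [if_pos h0, if_pos h0]
      simp [hh2, h0, DIPE.E_zero]
    · rw [if_neg h0, if_neg h0]
  rw [hexact, ← Summable.tsum_sub hsum_ite hsum_h2]
  have hptwise : ∀ p : ℤ × ℤ,
      (if p.2 = 0 then h2 p else 0) - h2 p = -(if p.2 = 0 then 0 else h2 p) := by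
    intro p
    by_cases h0 : p.2 = 0 <;> simp [h0]
  rw [tsum_congr hptwise, tsum_neg, norm_neg]
  have hsum_ite2 : Summable (fun p : ℤ × ℤ => ‖if p.2 = 0 then 0 else h2 p‖) := by
    refine hTsum.congr (fun p => ?_)
    by_cases h0 : p.2 = 0
    · simp [h0]
    · rw [if_neg h0, if_neg h0, hnorm_h2]
  refine le_trans (norm_tsum_le_tsum_norm hsum_ite2) ?_
  refine le_trans (le_of_eq (tsum_congr (fun p : ℤ × ℤ => ?_))) hTbound
  by_cases h0 : p.2 = 0
  · simp [h0]
  · rw [if_neg h0, if_neg h0, hnorm_h2]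
end
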